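/- Expansion of the bt-Weingarten function via flip- and hive-weighted monotone factorisations: For every k ≥ 1 and every 𝔪 ∈ 𝒫_k, the following identity holds in (ℤ[b,y])⟦X⟧: Wg^(bt)(𝔪) = Σ_{r≥0} (−X)^r Σ_{τ ∈ Mono(𝔪), ℓ(τ) = r} b^{flip(τ)} (y−1)^{hive(τ)} y^{k−hive(τ)}. -/

import Mathlib

open scoped Classical
open MeasureTheory



/-- A pair partition of `{1, …, 2k}`, encoded as an involution of `ℕ` that
moves exactly the points `1, …, 2k`.  The pairs are the two-element sets `{a, f a}`. -/
structure PairPartition (k : ℕ) where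
  f : ℕ → ℕ
  invol : ∀ a, f (f a) = a
  moves : ∀ a, f a ≠ a ↔ (1 ≤ a ∧ a ≤ 2 * k)

namespace PairPartition

/-- The function underlying the identity (trivial) pair partition
`(1 2 | 3 4 | ⋯ | 2k-1 2k)`. -/
def trivFun (k : ℕ) (a : ℕ) : ℕ :=
  if 1 ≤ a ∧ a ≤ 2 * k then (if a % 2 = 1 then a + 1 else a - 1) else a

/-- The identity pair partition `𝔢_k = (1 2 | 3 4 | ⋯ | 2k-1 2k)`. -/
def triv (k : ℕ) : PairPartition k where
  f := trivFun k
  invol := by intro a; unfold trivFun; split_ifs <;> omega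
  moves := by intro a; unfold trivFun; split_ifs <;> omega

theorem ext' {k : ℕ} {m m' : PairPartition k} (h : m.f = m'.f) : m = m' := by
  cases m; cases m'; simpa using h

/-- The action of the transposition `(i j) ∈ S_{2k}` on pair partitions of `{1, …, 2k}`
(defined to do nothing if `i` or `j` lies outside `{1, …, 2k}`). -/
def swapAct {k : ℕ} (i j : ℕ) (m : PairPartition k) : PairPartition k :=
  if h : 1 ≤ i ∧ i ≤ 2 * k ∧ 1 ≤ j ∧ j ≤ 2 * k then
    { f := fun a => Equiv.swap i j (m.f (Equiv.swap i j a))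
      invol := by intro a; simp [m.invol]
      moves := by
        obtain ⟨hi1, hi2, hj1, hj2⟩ := h
        intro a
        have key : ∀ x y : ℕ, Equiv.swap i j x ≠ y ↔ x ≠ Equiv.swap i j y := by
          intro x y
          constructor
          · intro hxy hc; apply hxy; rw [hc]; simp
          · intro hxy hc; apply hxy; rw [← hc]; simp
        rw [key, ← Equiv.swap_apply_self i j a, Equiv.swap_apply_self i j a]
        rw [m.moves (Equiv.swap i j a)]
        rcases eq_or_ne a i with rfl | hai
        · rw [Equiv.swap_apply_left]; omega
        rcases eq_or_ne a j with rfl | haj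
        · rw [Equiv.swap_apply_right]; omega
        · rw [Equiv.swap_apply_of_ne_of_ne hai haj] }
  else m

/-- Removing the pair `{2k-1, 2k}` from a pair partition: the operation `𝔪 ↦ 𝔪↓`
(defined to return the trivial pair partition if `{2k-1, 2k} ∉ 𝔪`). -/
def down {k : ℕ} (m : PairPartition k) : PairPartition (k - 1) :=
  if h : m.f (2 * k - 1) = 2 * k then
    { f := fun a => if a = 2 * k - 1 ∨ a = 2 * k then a else m.f a
      invol := by
        intro a
        by_cases ha : a = 2 * k - 1 ∨ a = 2 * k
        · simp [ha]
        · have h2k : m.f (2 * k) = 2 * k - 1 := by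
            conv_lhs => rw [← h]
            exact m.invol _
          have hne1 : m.f a ≠ 2 * k - 1 := by
            intro hfa
            have h1 : m.f (m.f a) = m.f (2 * k - 1) := by rw [hfa]
            rw [m.invol, h] at h1
            exact ha (Or.inr h1)
          have hne2 : m.f a ≠ 2 * k := by
            intro hfa
            have h1 : m.f (m.f a) = m.f (2 * k) := by rw [hfa]
            rw [m.invol, h2k] at h1
            exact ha (Or.inl h1)
          simp only [if_neg ha, if_neg (not_or.mpr ⟨hne1, hne2⟩), m.invol]
      moves := by
        intro a
        by_cases ha : a = 2 * k - 1 ∨ a = 2 * k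
        · simp only [if_pos ha]
          rcases ha with ha | ha <;> subst ha <;> constructor <;> intro h' <;> first
            | exact absurd rfl h'
            | omega
        · push_neg at ha
          obtain ⟨ha1, ha2⟩ := ha
          simp only [if_neg (not_or.mpr ⟨ha1, ha2⟩)]
          rw [m.moves a]
          omega }
  else triv (k - 1)

/-- A pair partition as a permutation (involution) of `ℕ`. -/
def perm {k : ℕ} (m : PairPartition k) : Equiv.Perm ℕ :=
  Function.Involutive.toPerm m.f m.invol

end PairPartition

namespace PairPartition

/-- The connected component (cycle) of the multigraph `Γ(𝔪)` containing a vertex `v`: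
the orbit of `v` under the group generated by the involutions `𝔢_k` and `𝔪`. -/
def gammaOrbit {k : ℕ} (m : PairPartition k) (v : ℕ) : Set ℕ :=
  MulAction.orbit (Subgroup.closure {(triv k).perm, m.perm} : Subgroup (Equiv.Perm ℕ)) v

/-- The charge function of `Γ(𝔪)`: `charge m v` holds iff `v` receives charge `+`,
i.e. iff `v` is at even distance (in `Γ(𝔪)`) from the largest label of its cycle.
The vertices at even distance from the largest label `M` of a cycle are exactly the
orbit of `M` under the cyclic group generated by `𝔪 ∘ 𝔢_k`. -/
def charge {k : ℕ} (m : PairPartition k) (v : ℕ) : Prop :=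
  v ∈ MulAction.orbit (Subgroup.zpowers (m.perm * (triv k).perm) : Subgroup (Equiv.Perm ℕ))
        (sSup (gammaOrbit m v))

/-- The weight `ω^(b)(𝔪, (i j)·𝔪)` attached to the transposition `(i j)` acting on `𝔪`:
it is `1` if the charges of `i` and `j` in `Γ(𝔪)` agree, and `b` otherwise. -/
noncomputable def omegab {R : Type*} [CommRing R] (b : R) {k : ℕ}
    (m : PairPartition k) (i j : ℕ) : R :=
  if (charge m i ↔ charge m j) then 1 else b

/-- The number of cycles of `Γ(𝔪)` of length `2ℓ`, i.e. the multiplicity of `ℓ`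
in the coset-type `λ(𝔪)` of `𝔪`. -/
noncomputable def cycleCount {k : ℕ} (m : PairPartition k) (ℓ : ℕ) : ℕ :=
  (((Finset.Icc 1 (2 * k)).filter fun a => (gammaOrbit m a).ncard = 2 * ℓ).card) / (2 * ℓ)

/-- Two pair partitions have the same coset-type iff `Γ(𝔪)` and `Γ(𝔪')` have the same
number of cycles of every length. -/
def SameCosetType {k : ℕ} (m m' : PairPartition k) : Prop :=
  ∀ ℓ : ℕ, cycleCount m ℓ = cycleCount m' ℓ

/-- The pair partition `𝔪` has coset-type the multiset `μ` (a partition of `k`,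
presented as the multiset of its parts). -/
def HasCosetType {k : ℕ} (m : PairPartition k) (μ : Multiset ℕ) : Prop :=
  ∀ ℓ : ℕ, 1 ≤ ℓ → μ.count ℓ = cycleCount m ℓ

/-- All lists of length `n` with entries in the finset `S`. -/
def listsLen (S : Finset (ℕ × ℕ)) : ℕ → Finset (List (ℕ × ℕ))
  | 0 => {[]}
  | n + 1 => (S ×ˢ listsLen S n).image fun p => p.1 :: p.2

/-- Apply a sequence `τ = (τ_1, …, τ_r)` of transpositions (each encoded as a pair)
to a pair partition, the rightmost transposition acting first:
`τ_1 ∘ τ_2 ∘ ⋯ ∘ τ_r · 𝔪`. -/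
def applyFacts {k : ℕ} (l : List (ℕ × ℕ)) (m : PairPartition k) : PairPartition k :=
  l.foldr (fun t acc => swapAct t.1 t.2 acc) m

/-- `l` is a monotone factorisation of the pair partition `𝔪 ∈ 𝒫_k`: a sequence of
transpositions `(a_s b_s)` with `a_s < b_s`, all `b_s` odd, `b_1 ≤ b_2 ≤ ⋯ ≤ b_r`,
and `τ_1 ∘ ⋯ ∘ τ_r · 𝔪 = 𝔢_k`. -/
def IsMonoFact {k : ℕ} (m : PairPartition k) (l : List (ℕ × ℕ)) : Prop :=
  (∀ t ∈ l, 1 ≤ t.1 ∧ t.1 < t.2 ∧ t.2 ≤ 2 * k ∧ Odd t.2) ∧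
  List.Pairwise (· ≤ ·) (l.map Prod.snd) ∧
  applyFacts l m = triv k

/-- The hive number of a monotone factorisation: the number of distinct values among
`b_1, …, b_r`. -/
def hive (l : List (ℕ × ℕ)) : ℕ := (l.map Prod.snd).toFinset.card

/-- The flip number of a monotone factorisation `τ` of `𝔪`: the number of indices `s`
with `ω^(b)(𝔪^(s), τ_s · 𝔪^(s)) = b`, where `𝔪^(s) = τ_{s+1} ∘ ⋯ ∘ τ_r · 𝔪`. -/
noncomputable def flip {k : ℕ} (m : PairPartition k) : List (ℕ × ℕ) → ℕ
  | [] => 0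
  | t :: rest =>
      (if (charge (applyFacts rest m) t.1 ↔ charge (applyFacts rest m) t.2) then 0 else 1)
        + flip m rest

/-- The finset of monotone factorisations of `𝔪 ∈ 𝒫_k` of length `r`. -/
noncomputable def monoFinset {k : ℕ} (m : PairPartition k) (r : ℕ) : Finset (List (ℕ × ℕ)) :=
  (listsLen ((Finset.Icc 1 (2 * k)) ×ˢ (Finset.Icc 1 (2 * k))) r).filter fun l => IsMonoFact m l

/-- A sequence of transpositions is connected (relative to level `k`) if together with the
involution `ι = (1 2)(3 4)⋯(2k-1 2k)` it generates a subgroup acting transitively on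
`{1, …, 2k}`. -/
def IsConnectedFact (k : ℕ) (l : List (ℕ × ℕ)) : Prop :=
  ∀ a ∈ Finset.Icc 1 (2 * k), ∀ b ∈ Finset.Icc 1 (2 * k),
    ∃ σ ∈ Subgroup.closure
        ({(triv k).perm} ∪ {p : Equiv.Perm ℕ | ∃ t ∈ l, p = Equiv.swap t.1 t.2}),
      σ a = b

end PairPartition


noncomputable instance matrixMeasurableSpace {N : ℕ} :
    MeasurableSpace (Matrix (Fin N) (Fin N) ℝ) :=
  inferInstanceAs (MeasurableSpace (Fin N → Fin N → ℝ))

/-- The compact group `O(N)` of real orthogonal `N × N` matrices. -/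
abbrev OrthGroup (N : ℕ) := Matrix.orthogonalGroup (Fin N) ℝ

noncomputable instance orthMeasurableSpace {N : ℕ} : MeasurableSpace (OrthGroup N) :=
  borel _

/-- The diagonal matrix `I_{M,N}` whose first `M` diagonal entries are `1` and whose
remaining entries are `0`. -/
def IMN (N M : ℕ) : Matrix (Fin N) (Fin N) ℝ :=
  Matrix.diagonal fun p => if (p : ℕ) < M then (1 : ℝ) else 0

/-- The map `O ↦ O · I_{M,N} · Oᵀ` from `O(N)` onto the space `A(M,N)` of idempotent
real symmetric `N × N` matrices of rank `M`. -/
def grassMap (N M : ℕ) (O : OrthGroup N) : Matrix (Fin N) (Fin N) ℝ :=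
  (O : Matrix (Fin N) (Fin N) ℝ) * IMN N M * Matrix.transpose (O : Matrix (Fin N) (Fin N) ℝ)


/-- The product `A_{i(1)i(2)} A_{i(3)i(4)} ⋯ A_{i(2k-1)i(2k)}` of matrix entries. -/
def prodEntries {N : ℕ} (k : ℕ) (i : ℕ → Fin N) (A : Matrix (Fin N) (Fin N) ℝ) : ℝ :=
  ∏ a ∈ Finset.range k, A (i (2 * a + 1)) (i (2 * a + 2))



open PairPartition


/-- A step in the (`b`- or `bt`-) Weingarten graph: a type-A edge `𝔪 → (i 2k-1)·𝔪`,
a type-B edge `𝔪 → 𝔪↓`, or a type-C edge `𝔪 → ((i 2k-1)·𝔪)↓`. -/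
inductive WStep where
  | A (i : ℕ) : WStep
  | B : WStep
  | C (i : ℕ) : WStep
deriving DecidableEq

/-- `IsPathTo k 𝔪 ρ` holds iff `ρ` is a path in the `bt`-Weingarten graph from the
pair partition `𝔪 ∈ 𝒫_k` to the empty pair partition. -/
def IsPathTo : (k : ℕ) → PairPartition k → List WStep → Prop
  | 0, _, [] => True
  | _ + 1, _, [] => False
  | 0, _, _ :: _ => False
  | k + 1, m, WStep.A i :: ρ =>
      1 ≤ i ∧ i ≤ 2 * (k + 1) - 2 ∧ IsPathTo (k + 1) (swapAct i (2 * (k + 1) - 1) m) ρ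
  | k + 1, m, WStep.B :: ρ =>
      m.f (2 * (k + 1) - 1) = 2 * (k + 1) ∧ IsPathTo k (down m) ρ
  | k + 1, m, WStep.C i :: ρ =>
      1 ≤ i ∧ i ≤ 2 * (k + 1) - 2 ∧ m.f i = 2 * (k + 1) ∧
        IsPathTo k (down (swapAct i (2 * (k + 1) - 1) m)) ρ

/-- The product of the `b`-dependent edge weights along a path. -/
noncomputable def pathWeight {R : Type*} [CommRing R] (b : R) :
    (k : ℕ) → PairPartition k → List WStep → R
  | _, _, [] => 1
  | 0, _, _ :: _ => 1
  | k + 1, m, WStep.A i :: ρ =>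
      omegab b m i (2 * (k + 1) - 1) * pathWeight b (k + 1) (swapAct i (2 * (k + 1) - 1) m) ρ
  | k + 1, m, WStep.B :: ρ => pathWeight b k (down m) ρ
  | k + 1, m, WStep.C i :: ρ => pathWeight b k (down (swapAct i (2 * (k + 1) - 1) m)) ρ

/-- The number of type-A edges of a path. -/
def countA (l : List WStep) : ℕ :=
  (l.filter fun s => match s with | WStep.A _ => true | _ => false).length

/-- The number of type-B edges of a path. -/
def countB (l : List WStep) : ℕ :=
  (l.filter fun s => match s with | WStep.B => true | _ => false).length

/-- The number of type-C edges of a path. -/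
def countC (l : List WStep) : ℕ :=
  (l.filter fun s => match s with | WStep.C _ => true | _ => false).length

/-- The `b`-Weingarten function `Wg^(b)(𝔪) ∈ ℤ[b]⟦X⟧`: the coefficient of `X^n` is the
sum of `(-1)^{ℓ_A(ρ)} w(ρ)` over all paths `ρ` (with no type-C edges, i.e. paths in the
`b`-Weingarten graph) from `𝔪` to the empty pair partition with `ℓ_A(ρ) + ℓ_B(ρ) = n`.
Here `b` is the polynomial variable of `ℤ[b]`. -/
noncomputable def WgB (k : ℕ) (m : PairPartition k) : PowerSeries (Polynomial ℤ) :=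
  PowerSeries.mk fun n =>
    ∑ᶠ (ρ : List WStep)
      (_ : IsPathTo k m ρ ∧ (∀ i, WStep.C i ∉ ρ) ∧ countA ρ + countB ρ = n),
      (-1 : Polynomial ℤ) ^ countA ρ * pathWeight (Polynomial.X : Polynomial ℤ) k m ρ

/-- The `bt`-Weingarten function `Wg^(bt)(𝔪) ∈ (ℤ[b,y])⟦X⟧`: the coefficient of `X^n` is
the sum of `(-1)^{ℓ_A(ρ)} y^{ℓ_B(ρ)} w(ρ)` over all paths `ρ` in the `bt`-Weingarten graph
from `𝔪` to the empty pair partition with `ℓ_A(ρ) + ℓ_C(ρ) = n`.  Here `b = X 0` and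
`y = X 1` in `ℤ[b,y] = MvPolynomial (Fin 2) ℤ`. -/
noncomputable def WgBT (k : ℕ) (m : PairPartition k) :
    PowerSeries (MvPolynomial (Fin 2) ℤ) :=
  PowerSeries.mk fun n =>
    ∑ᶠ (ρ : List WStep) (_ : IsPathTo k m ρ ∧ countA ρ + countC ρ = n),
      (-1 : MvPolynomial (Fin 2) ℤ) ^ countA ρ * (MvPolynomial.X 1) ^ countB ρ *
        pathWeight (MvPolynomial.X 0 : MvPolynomial (Fin 2) ℤ) k m ρ

/-- The standard basis vector `𝔪` of the free module with basis `𝒫_k`,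
realised as functions `𝒫_k → R`. -/
noncomputable def basisVec {R : Type*} [CommRing R] (k : ℕ) (m : PairPartition k) :
    PairPartition k → R :=
  fun n => if n = m then 1 else 0

/-- The `b`-deformed Jucys–Murphy operator `𝒥_i` acting on the free module with basis
`𝒫_k` (realised as functions `𝒫_k → R`): on basis vectors,
`𝒥_i(𝔪) = ∑_{a=1}^{2i-2} ω^(b)((a 2i-1)·𝔪, 𝔪) · (a 2i-1)·𝔪`. -/
noncomputable def JbOp {R : Type*} [CommRing R] (b : R) {k : ℕ} (i : ℕ)
    (v : PairPartition k → R) : PairPartition k → R :=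
  fun n => ∑ a ∈ Finset.Icc 1 (2 * i - 2),
    omegab b n a (2 * i - 1) * v (swapAct a (2 * i - 1) n)

/-- The (odd) Jucys–Murphy element `J_{2i-1} = ∑_{a=1}^{2i-2} (a
 2i-1)` of the group
algebra of `S_{2k}`, acting on the free module with basis `𝒫_k` via the linear extension
of the `S_{2k}`-action on pair partitions. -/
noncomputable def JoddOp {R : Type*} [CommRing R] {k : ℕ} (i : ℕ)
    (v : PairPartition k → R) : PairPartition k → R :=
  fun n => ∑ a ∈ Finset.Icc 1 (2 * i - 2), v (swapAct a (2 * i - 1) n)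

/-- The vector `𝔭_μ = ∑_{𝔪 : λ(𝔪) = μ} 𝔪`, i.e. the indicator function of the set of
pair partitions of coset-type `μ`. -/
noncomputable def pVec {R : Type*} [CommRing R] (k : ℕ) (μ : Multiset ℕ) :
    PairPartition k → R :=
  fun m => if HasCosetType m μ then 1 else 0

noncomputable def applyPows {R : Type*} [CommRing R] (b : R) {k : ℕ} :
    List (ℕ × ℕ) → (PairPartition k → R) → (PairPartition k → R)
  | [], v => v
  | ia :: rest, v => (JbOp b ia.1)^[ia.2] (applyPows b rest v)


/-- The coefficient ring `ℤ[b,y]⟦X⟧`, with `b = X 0` and `y = X 1`. -/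
abbrev SeriesRing := PowerSeries (MvPolynomial (Fin 2) ℤ)

noncomputable def bS : SeriesRing := PowerSeries.C (MvPolynomial.X 0)
noncomputable def yS : SeriesRing := PowerSeries.C (MvPolynomial.X 1)

/-- The operator-valued power series `(1 + X·𝒥_i)⁻¹ = ∑_{j ≥ 0} (-X)^j 𝒥_i^j`
applied to a vector `v`, computed coefficientwise. -/
noncomputable def invApply (k : ℕ) (i : ℕ) (v : PairPartition k → SeriesRing) :
    PairPartition k → SeriesRing :=
  fun n => PowerSeries.mk fun d =>
    ∑ᶠ j : ℕ, PowerSeries.coeff d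
      ((-(PowerSeries.X : SeriesRing)) ^ j * ((JbOp bS i)^[j] v) n)

/-- The vector `(y + X𝒥_j)(1 + X𝒥_j)⁻¹ ⋯ (y + X𝒥_1)(1 + X𝒥_1)⁻¹ (𝔢_k)`. -/
noncomputable def prodVec (k : ℕ) : ℕ → (PairPartition k → SeriesRing)
  | 0 => fun n => if n = triv k then 1 else 0
  | j + 1 => fun n =>
      yS * invApply k (j + 1) (prodVec k j) n +
        PowerSeries.X * (JbOp bS (j + 1) (invApply k (j + 1) (prodVec k j))) n


open MvPolynomial

/-- The formal partial derivative `∂_n = ∂/∂p_n` on the polynomial ring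
`K[p_1, p_2, …]` (the variables being indexed by positive naturals);
junk value `0` for `n = 0`. -/
noncomputable def pd (K : Type*) [CommRing K] (n : ℕ) :
    MvPolynomial ℕ+ K →ₗ[K] MvPolynomial ℕ+ K :=
  if h : 0 < n then (pderiv (⟨n, h⟩ : ℕ+)).toLinearMap else 0

/-- The variable `p_n` of `K[p_1, p_2, …]`; junk value `0` for `n = 0`. -/
noncomputable def pvar (K : Type*) [CommRing K] (n : ℕ) : MvPolynomial ℕ+ K :=
  if h : 0 < n then X ⟨n, h⟩ else 0

section SumOp

variable (K : Type*) [CommRing K]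

lemma sumOp_support_subset (m : ℕ) (f : MvPolynomial ℕ+ K) :
    (Function.support fun i => ((i + m : ℕ) : K) • (pvar K i * pd K (i + m) f)) ⊆
      ((fun i => i + m) ⁻¹' ↑(f.vars.image (fun v : ℕ+ => (v : ℕ)))) := by
  intro i hi
  simp only [Function.mem_support] at hi
  by_contra hmem
  apply hi
  rcases Nat.eq_zero_or_pos (i + m) with h0 | h0
  · have hi0 : i = 0 := by omega
    subst hi0
    simp [pvar]
  · have hnot : (⟨i + m, h0⟩ : ℕ+) ∉ f.vars := by
      intro hv
      apply hmem
      simp only [Set.mem_preimage, Finset.coe_image, Set.mem_image, Finset.mem_coe]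
      exact ⟨⟨i + m, h0⟩, hv, rfl⟩
    have hz : pd K (i + m) f = 0 := by
      rw [show pd K (i + m) = (pderiv (⟨i + m, h0⟩ : ℕ+)).toLinearMap from dif_pos h0]
      have := pderiv_eq_zero_of_notMem_vars (R := K) hnot
      first | simpa using this | exact this
    rw [hz, mul_zero, smul_zero]

lemma sumOp_support_finite (m : ℕ) (f : MvPolynomial ℕ+ K) :
    (Function.support fun i => ((i + m : ℕ) : K) • (pvar K i * pd K (i + m) f)).Finite := by
  apply Set.Finite.subset _ (sumOp_support_subset K m f)
  apply Set.Finite.preimage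
  · exact (add_left_injective m).injOn
  · exact (f.vars.image (fun v : ℕ+ => (v : ℕ))).finite_toSet

/-- The operator `∑_{i ≥ 1} (i+m) p_i ∂_{i+m}` on `K[p_1, p_2, …]`
(a well-defined linear operator, the sum being locally finite on polynomials). -/
noncomputable def sumOp (m : ℕ) : MvPolynomial ℕ+ K →ₗ[K] MvPolynomial ℕ+ K where
  toFun f := ∑ᶠ i : ℕ, ((i + m : ℕ) : K) • (pvar K i * pd K (i + m) f)
  map_add' x y := by
    have key : ∀ i : ℕ, ((i + m : ℕ) : K) • (pvar K i * pd K (i + m) (x + y)) =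
        ((i + m : ℕ) : K) • (pvar K i * pd K (i + m) x) +
          ((i + m : ℕ) : K) • (pvar K i * pd K (i + m) y) := by
      intro i
      rw [map_add, mul_add, smul_add]
    try dsimp only
    rw [finsum_congr key]
    exact finsum_add_distrib (sumOp_support_finite K m x) (sumOp_support_finite K m y)
  map_smul' c x := by
    have key : ∀ i : ℕ, ((i + m : ℕ) : K) • (pvar K i * pd K (i + m) (c • x)) =
        c • (((i + m : ℕ) : K) • (pvar K i * pd K (i + m) x)) := by
      intro i
      rw [_root_.map_smul, smul_comm]
      congr 1
      rw [mul_smul_comm]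
    try dsimp only
    rw [finsum_congr key]
    simp only [RingHom.id_apply]
    exact (smul_finsum' c (sumOp_support_finite K m x)).symm
end SumOp

/-- The `bt`-deformed Virasoro-type operator `L_m` of Theorem 3.5/4.7, acting on the
polynomial ring `K[p_1, p_2, …]`. -/
noncomputable def Lop (K : Type*) [CommRing K] (b t z hbar : K) (m : ℕ) :
    MvPolynomial ℕ+ K →ₗ[K] MvPolynomial ℕ+ K :=
  (((m : K) * Ring.inverse hbar) • pd K m)
    - (1 + b) • (∑ i ∈ Finset.Ioo 0 m,
        (((i : ℕ) : K) * (((m - i : ℕ)) : K)) • (pd K i ∘ₗ pd K (m - i)))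
    - sumOp K m
    - ((b * (m : K) * ((m - 1 : ℕ) : K)) • pd K m)
    - ((z * Ring.inverse hbar * (t - 1) * ((m - 1 : ℕ) : K)) • pd K (m - 1))
    - (if m = 1 then (z * Ring.inverse hbar * Ring.inverse hbar * Ring.inverse (1 + b)) •
        (LinearMap.id : MvPolynomial ℕ+ K →ₗ[K] MvPolynomial ℕ+ K) else 0)
open PairPartition

/-- `i : {1,…,2k} → {1,…,N}` is admissible for `𝔪`: `{a,b} ∈ 𝔪` implies `i a = i b`. -/
def Admissible {N : ℕ} (k : ℕ) (m : PairPartition k) (i : ℕ → Fin N) : Prop :=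
  ∀ a, 1 ≤ a → a ≤ 2 * k → i (m.f a) = i a

/-- `i : {1,…,2k} → {1,…,N}` is strongly admissible for `𝔪`:
for `a, b ∈ {1,…,2k}`, `i a = i b` holds iff `a = b` or `{a,b} ∈ 𝔪`. -/
def StronglyAdmissible {N : ℕ} (k : ℕ) (m : PairPartition k) (i : ℕ → Fin N) : Prop :=
  ∀ a b, 1 ≤ a → a ≤ 2 * k → 1 ≤ b → b ≤ 2 * k → (i a = i b ↔ (a = b ∨ m.f a = b))

/-- `ĥ^{(t)}_r(𝔪)` evaluated at a real number `t`: the weighted count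
`∑_{τ ∈ Mono(𝔪), ℓ(τ) = r} t^{hive(τ)}`. -/
noncomputable def hiveSum {k : ℕ} (m : PairPartition k) (r : ℕ) (t : ℝ) : ℝ :=
  ∑ l ∈ monoFinset m r, t ^ hive l

/-- The `bt`-monotone count `∑_{τ ∈ Mono(𝔪), ℓ(τ) = r} b^{flip(τ)} t^{hive(τ)}`
in `ℤ[b,t]`, with `b = X 0` and `t = X 1`. -/
noncomputable def btSum {k : ℕ} (m : PairPartition k) (r : ℕ) : MvPolynomial (Fin 2) ℤ :=
  ∑ l ∈ monoFinset m r,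
    (MvPolynomial.X 0 : MvPolynomial (Fin 2) ℤ) ^ (flip m l) *
      (MvPolynomial.X 1) ^ (hive l)

/-- The connected `bt`-monotone count
`∑_{τ ∈ CMono(𝔪), ℓ(τ) = r} b^{flip(τ)} t^{hive(τ)}` in `ℚ[b,t]`,
with `b = X 0` and `t = X 1`. -/
noncomputable def cMonoSum {k : ℕ} (m : PairPartition k) (r : ℕ) : MvPolynomial (Fin 2) ℚ :=
  ∑ l ∈ (monoFinset m r).filter (fun l => IsConnectedFact k l),
    (MvPolynomial.X 0 : MvPolynomial (Fin 2) ℚ) ^ (flip m l) *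
      (MvPolynomial.X 1) ^ (hive l)

/-- The operator `c + J_{2i-1}` on the free module with basis `𝒫_k`. -/
noncomputable def affJoddOp {k : ℕ} (c : ℝ) (i : ℕ) (v : PairPartition k → ℝ) :
    PairPartition k → ℝ :=
  fun n => c * v n + JoddOp i v n

open scoped Classical
namespace PairPartition
variable {k : ℕ}

lemma f_ne_iff (m : PairPartition k) (a : ℕ) : m.f a ≠ a ↔ (1 ≤ a ∧ a ≤ 2*k) := m.moves a

lemma f_mem (m : PairPartition k) {a : ℕ} (h1 : 1 ≤ a) (h2 : a ≤ 2*k) :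
    1 ≤ m.f a ∧ m.f a ≤ 2*k := by
  have hne : m.f a ≠ a := (m.moves a).2 ⟨h1, h2⟩
  have : m.f (m.f a) ≠ m.f a := by rw [m.invol]; exact fun h => hne h.symm
  exact (m.moves (m.f a)).1 this

lemma f_inj (m : PairPartition k) {a b : ℕ} (h : m.f a = m.f b) : a = b := by
  have := m.invol a; rw [h, m.invol] at this; exact this.symm

lemma f_out (m : PairPartition k) {a : ℕ} (h : ¬ (1 ≤ a ∧ a ≤ 2*k)) : m.f a = a := by
  by_contra hne; exact h ((m.moves a).1 hne)

lemma triv_f (a : ℕ) : (triv k).f a = trivFun k a := rfl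

lemma trivFun_low {k' : ℕ} (hk : k' ≤ k) {a : ℕ} (ha : a ≤ 2*k') :
    trivFun k a = trivFun k' a := by
  unfold trivFun; split_ifs <;> omega

end PairPartition


open scoped Classical
namespace PairPartition
variable {k : ℕ}

lemma swapAct_f {i j : ℕ} (m : PairPartition k)
    (h : 1 ≤ i ∧ i ≤ 2*k ∧ 1 ≤ j ∧ j ≤ 2*k) (a : ℕ) :
    (swapAct i j m).f a = Equiv.swap i j (m.f (Equiv.swap i j a)) := by
  unfold swapAct; rw [dif_pos h]

lemma swapAct_out {i j : ℕ} (m : PairPartition k)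
    (h : ¬ (1 ≤ i ∧ i ≤ 2*k ∧ 1 ≤ j ∧ j ≤ 2*k)) : swapAct i j m = m := by
  unfold swapAct; rw [dif_neg h]

lemma swapAct_fixed {i j : ℕ} (m : PairPartition k) {x : ℕ}
    (hxi : x ≠ i) (hxj : x ≠ j) (hfi : m.f x ≠ i) (hfj : m.f x ≠ j) :
    (swapAct i j m).f x = m.f x := by
  by_cases h : 1 ≤ i ∧ i ≤ 2*k ∧ 1 ≤ j ∧ j ≤ 2*k
  · rw [swapAct_f m h, Equiv.swap_apply_of_ne_of_ne hxi hxj,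
      Equiv.swap_apply_of_ne_of_ne hfi hfj]
  · rw [swapAct_out m h]

lemma swapAct_invol {i j : ℕ} (m : PairPartition k) :
    swapAct i j (swapAct i j m) = m := by
  by_cases h : 1 ≤ i ∧ i ≤ 2*k ∧ 1 ≤ j ∧ j ≤ 2*k
  · apply ext'; funext a
    rw [swapAct_f _ h, swapAct_f _ h]
    simp
  · rw [swapAct_out _ h, swapAct_out _ h]

lemma perm_apply (m : PairPartition k) (a : ℕ) : m.perm a = m.f a := rfl

/-- top pair preserved by low swaps -/
lemma swapAct_top {i j : ℕ} (m : PairPartition (k+1))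
    (hi : i ≤ 2*k) (hj : j ≤ 2*k) :
    (swapAct i j m).f (2*k+1) = 2*(k+1) ↔ m.f (2*k+1) = 2*(k+1) := by
  by_cases h : 1 ≤ i ∧ i ≤ 2*(k+1) ∧ 1 ≤ j ∧ j ≤ 2*(k+1)
  · rw [swapAct_f m h]
    have harg : Equiv.swap i j (2*k+1) = 2*k+1 :=
      Equiv.swap_apply_of_ne_of_ne (by omega) (by omega)
    rw [harg]
    constructor
    · intro hs
      have h2 := congrArg (Equiv.swap i j) hs
      rw [Equiv.swap_apply_self] at h2
      rw [h2, Equiv.swap_apply_of_ne_of_ne (by omega) (by omega)]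
    · intro hs; rw [hs, Equiv.swap_apply_of_ne_of_ne (by omega) (by omega)]
  · rw [swapAct_out m h]

lemma down_f {k : ℕ} (m : PairPartition (k+1)) (h : m.f (2*(k+1)-1) = 2*(k+1)) (a : ℕ) :
    (down m).f a = if a = 2*(k+1)-1 ∨ a = 2*(k+1) then a else m.f a := by
  unfold down; rw [dif_pos h]

lemma down_f_low {k : ℕ} (m : PairPartition (k+1)) (h : m.f (2*(k+1)-1) = 2*(k+1))
    {a : ℕ} (ha : a ≤ 2*k) : (down m).f a = m.f a := by
  rw [down_f m h]; rw [if_neg]; omega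

lemma down_triv {k : ℕ} : down (triv (k+1)) = triv k := by
  have h : (triv (k+1)).f (2*(k+1)-1) = 2*(k+1) := by
    show trivFun (k+1) (2*(k+1)-1) = 2*(k+1)
    unfold trivFun
    rw [if_pos (by omega), if_pos (by omega)]
    omega
  apply ext'; funext a
  rw [down_f _ h]
  by_cases ha : a = 2*(k+1)-1 ∨ a = 2*(k+1)
  · rw [if_pos ha]
    show _ = trivFun k a
    unfold trivFun; rw [if_neg (by omega)]
  · rw [if_neg ha]
    show trivFun (k+1) a = trivFun k a
    by_cases h2 : a ≤ 2*k
    · exact trivFun_low (by omega) h2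
    · unfold trivFun; rw [if_neg (by omega), if_neg (by omega)]

lemma triv_top {k : ℕ} : (triv (k+1)).f (2*k+1) = 2*(k+1) := by
  show trivFun (k+1) (2*k+1) = 2*(k+1)
  unfold trivFun; rw [if_pos (by omega), if_pos (by omega)]; omega

/-- reconstruct: pair + down determines m -/
lemma eq_triv_of_down {k : ℕ} (m : PairPartition (k+1)) (h : m.f (2*(k+1)-1) = 2*(k+1))
    (hd : down m = triv k) : m = triv (k+1) := by
  apply ext'; funext a
  by_cases ha : a = 2*(k+1)-1 ∨ a = 2*(k+1)
  · rcases ha with rfl | rfl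
    · rw [h]; show _ = trivFun (k+1) _
      unfold trivFun; rw [if_pos (by omega), if_pos (by omega)]; omega
    · have : m.f (m.f (2*(k+1)-1)) = 2*(k+1)-1 := m.invol _
      rw [h] at this; rw [this]
      show _ = trivFun (k+1) _
      unfold trivFun; rw [if_pos (by omega), if_neg (by omega)]
  · have := congrArg (fun p => p.f a) hd
    rw [down_f m h, if_neg ha] at this
    rw [this]
    show trivFun k a = trivFun (k+1) a
    by_cases h2 : a ≤ 2*k
    · exact (trivFun_low (by omega) h2).symm
    · unfold trivFun; rw [if_neg (by omega), if_neg (by omega)]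

end PairPartition


open scoped Classical
namespace PairPartition
variable {k : ℕ}

lemma orbit_eq_of_mem {G : Type*} [Group G] {α : Type*} [MulAction G α] {a b : α}
    (h : a ∈ MulAction.orbit G b) : MulAction.orbit G a = MulAction.orbit G b :=
  MulAction.orbit_eq_iff.mpr h

/-- Charge lemma: if {i, 2k+2} ∈ m then i and 2k+1 have equal charges. -/
lemma charge_C {m : PairPartition (k+1)} {i : ℕ} (hi1 : 1 ≤ i) (hi2 : i ≤ 2*k)
    (hf : m.f i = 2*(k+1)) : charge m i ↔ charge m (2*k+1) := by
  set H : Subgroup (Equiv.Perm ℕ) := Subgroup.closure {(triv (k+1)).perm, m.perm} with hH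
  have htriv : (triv (k+1)).perm ∈ H := Subgroup.subset_closure (by simp)
  have hm : m.perm ∈ H := Subgroup.subset_closure (by simp)
  have htf : (triv (k+1)).perm (2*(k+1)) = 2*k+1 := by
    show trivFun (k+1) (2*(k+1)) = 2*k+1
    unfold trivFun; rw [if_pos (by omega), if_neg (by omega)]; omega
  have horb : (2*k+1) ∈ gammaOrbit m i := by
    refine ⟨⟨(triv (k+1)).perm * m.perm, mul_mem htriv hm⟩, ?_⟩
    show ((triv (k+1)).perm * m.perm) i = 2*k+1
    show (triv (k+1)).perm (m.f i) = 2*k+1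
    rw [hf]; exact htf
  have hgo : gammaOrbit m (2*k+1) = gammaOrbit m i := orbit_eq_of_mem horb
  set σ := m.perm * (triv (k+1)).perm with hσ
  have hσi : σ (2*k+1) = i := by
    show m.perm ((triv (k+1)).perm (2*k+1)) = i
    show m.f ((triv (k+1)).f (2*k+1)) = i
    have h1 : (triv (k+1)).f (2*k+1) = 2*(k+1) := by
      show trivFun (k+1) (2*k+1) = 2*(k+1)
      unfold trivFun; rw [if_pos (by omega), if_pos (by omega)]; omega
    rw [h1]
    have := m.invol i
    rw [hf] at this
    exact this
  have hio : i ∈ MulAction.orbit (Subgroup.zpowers σ : Subgroup (Equiv.Perm ℕ)) (2*k+1) := by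
    refine ⟨⟨σ, Subgroup.mem_zpowers σ⟩, hσi⟩
  unfold charge
  rw [hgo]
  set M := sSup (gammaOrbit m i)
  rw [MulAction.mem_orbit_symm (a₂ := M), MulAction.mem_orbit_symm (a₁ := (2*k+1))]
  rw [orbit_eq_of_mem hio]

end PairPartition


open scoped Classical
namespace PairPartition

/-- Transfer of orbits between subgroups generated by perms agreeing on an invariant
finite set. -/
lemma orbit_transfer {p q p' q' : Equiv.Perm ℕ} {A : Set ℕ} (hA : A.Finite)
    (hp : ∀ a ∈ A, p a ∈ A) (hq : ∀ a ∈ A, q a ∈ A)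
    (hpe : ∀ a ∈ A, p a = p' a) (hqe : ∀ a ∈ A, q a = q' a)
    {v x : ℕ} (hv : v ∈ A)
    (hx : x ∈ MulAction.orbit (Subgroup.closure {p, q} : Subgroup (Equiv.Perm ℕ)) v) :
    x ∈ A ∧ x ∈ MulAction.orbit (Subgroup.closure {p', q'} : Subgroup (Equiv.Perm ℕ)) v := by
  obtain ⟨⟨g, hg⟩, rfl⟩ := hx
  show g v ∈ A ∧ _
  have key : ∀ (g : Equiv.Perm ℕ), g ∈ Subgroup.closure {p, q} → ∀ a ∈ A,
      g a ∈ A ∧ g a ∈ MulAction.orbit (Subgroup.closure {p', q'} : Subgroup (Equiv.Perm ℕ)) a := by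
    intro g hg
    induction hg using Subgroup.closure_induction with
    | mem x hx =>
      intro a ha
      rcases hx with rfl | rfl
      · exact ⟨hp a ha, by
          rw [hpe a ha]
          exact ⟨⟨p', Subgroup.subset_closure (by simp)⟩, rfl⟩⟩
      · exact ⟨hq a ha, by
          rw [hqe a ha]
          exact ⟨⟨q', Subgroup.subset_closure (by simp)⟩, rfl⟩⟩
    | one => intro a ha; exact ⟨ha, MulAction.mem_orbit_self a⟩
    | mul x y hx hy ihx ihy =>
      intro a ha
      obtain ⟨h1, h2⟩ := ihy a ha
      obtain ⟨h3, h4⟩ := ihx (y a) h1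
      refine ⟨h3, ?_⟩
      show x (y a) ∈ _
      rw [← orbit_eq_of_mem h2]
      exact h4
    | inv x hx ih =>
      intro a ha
      have hmaps : Set.MapsTo (⇑x) A A := fun b hb => (ih b hb).1
      have hbij : Set.BijOn (⇑x) A A :=
        (Set.Finite.injOn_iff_bijOn_of_mapsTo hA hmaps).mp (x.injective.injOn)
      obtain ⟨b, hb, hba⟩ := hbij.surjOn ha
      have hxinv : x⁻¹ a = b := by
        rw [← hba]; exact x.symm_apply_apply b
      rw [hxinv]
      refine ⟨hb, ?_⟩
      have := (ih b hb).2
      rw [hba] at this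
      exact MulAction.mem_orbit_symm.mp this
  exact key g hg v hv

lemma zpow_orbit_transfer {σ σ' : Equiv.Perm ℕ} {A : Set ℕ} (hA : A.Finite)
    (hs : ∀ a ∈ A, σ a ∈ A) (hse : ∀ a ∈ A, σ a = σ' a)
    {v x : ℕ} (hv : v ∈ A)
    (hx : x ∈ MulAction.orbit (Subgroup.zpowers σ : Subgroup (Equiv.Perm ℕ)) v) :
    x ∈ A ∧ x ∈ MulAction.orbit (Subgroup.zpowers σ' : Subgroup (Equiv.Perm ℕ)) v := by
  rw [Subgroup.zpowers_eq_closure] at hx ⊢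
  rw [← Set.pair_eq_singleton σ] at hx
  rw [← Set.pair_eq_singleton σ']
  exact orbit_transfer hA hs hs hse hse hv hx

end PairPartition


open scoped Classical
namespace PairPartition
variable {k : ℕ}

lemma charge_down (m : PairPartition (k+1)) (hpair : m.f (2*k+1) = 2*(k+1))
    {v : ℕ} (hv1 : 1 ≤ v) (hv2 : v ≤ 2*k) : (charge m v ↔ charge (down m) v) := by
  have hpair' : m.f (2*(k+1)-1) = 2*(k+1) := by
    have : 2*(k+1)-1 = 2*k+1 := by omega
    rw [this]; exact hpair
  have hf22 : m.f (2*(k+1)) = 2*k+1 := by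
    have := m.invol (2*k+1); rw [hpair] at this; exact this
  set A : Set ℕ := Set.Icc 1 (2*k) with hA
  have hAfin : A.Finite := Set.finite_Icc _ _
  have hmA : ∀ a ∈ A, m.perm a ∈ A := by
    intro a ha
    simp only [hA, Set.mem_Icc] at ha ⊢
    rw [perm_apply]
    have h1 := m.f_mem (k := k+1) ha.1 (by omega)
    have h2 : m.f a ≠ 2*k+1 := by
      intro h; have := m.f_inj (b := 2*(k+1)) (by rw [h, hf22]); omega
    have h3 : m.f a ≠ 2*(k+1) := by
      intro h; have := m.f_inj (b := 2*k+1) (by rw [h, hpair]); omega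
    omega
  have htA : ∀ a ∈ A, (triv (k+1)).perm a ∈ A := by
    intro a ha
    simp only [hA, Set.mem_Icc] at ha ⊢
    show 1 ≤ trivFun (k+1) a ∧ trivFun (k+1) a ≤ 2*k
    unfold trivFun
    rw [if_pos (by omega)]
    rcases Nat.even_or_odd a with he | ho
    · have h0 : a % 2 = 0 := Nat.even_iff.mp he
      rw [if_neg (by omega)]; omega
    · have h1 : a % 2 = 1 := Nat.odd_iff.mp ho
      rw [if_pos h1]; omega
  have hme : ∀ a ∈ A, m.perm a = (down m).perm a := by
    intro a ha
    simp only [hA, Set.mem_Icc] at ha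
    show m.f a = (down m).f a
    rw [down_f_low m hpair' ha.2]
  have hte : ∀ a ∈ A, (triv (k+1)).perm a = (triv k).perm a := by
    intro a ha
    simp only [hA, Set.mem_Icc] at ha
    show trivFun (k+1) a = trivFun k a
    exact trivFun_low (by omega) ha.2
  have hdA : ∀ a ∈ A, (down m).perm a ∈ A := fun a ha => (hme a ha) ▸ hmA a ha
  have htkA : ∀ a ∈ A, (triv k).perm a ∈ A := fun a ha => (hte a ha) ▸ htA a ha
  have hvA : v ∈ A := by simp only [hA, Set.mem_Icc]; exact ⟨hv1, hv2⟩
  -- gammaOrbit equality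
  have hsub1 : ∀ x ∈ gammaOrbit m v, x ∈ A ∧ x ∈ gammaOrbit (down m) v := by
    intro x hx
    exact orbit_transfer hAfin htA hmA hte hme hvA hx
  have hsub2 : ∀ x ∈ gammaOrbit (down m) v, x ∈ A ∧ x ∈ gammaOrbit m v := by
    intro x hx
    exact orbit_transfer hAfin htkA hdA
      (fun a ha => (hte a ha).symm) (fun a ha => (hme a ha).symm) hvA hx
  have hgo : gammaOrbit m v = gammaOrbit (down m) v := by
    apply Set.Subset.antisymm
    · exact fun x hx => (hsub1 x hx).2
    · exact fun x hx => (hsub2 x hx).2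
  have hgoA : gammaOrbit m v ⊆ A := fun x hx => (hsub1 x hx).1
  have hgofin : (gammaOrbit m v).Finite := hAfin.subset hgoA
  have hgone : (gammaOrbit m v).Nonempty := ⟨v, MulAction.mem_orbit_self v⟩
  have hM : sSup (gammaOrbit m v) ∈ gammaOrbit m v := hgone.csSup_mem hgofin
  have hMA : sSup (gammaOrbit m v) ∈ A := hgoA hM
  -- sigma
  set σ := m.perm * (triv (k+1)).perm with hσ
  set σ' := (down m).perm * (triv k).perm with hσ'
  have hsA : ∀ a ∈ A, σ a ∈ A := by
    intro a ha
    show m.perm ((triv (k+1)).perm a) ∈ A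
    exact hmA _ (htA a ha)
  have hs'A : ∀ a ∈ A, σ' a ∈ A := by
    intro a ha
    show (down m).perm ((triv k).perm a) ∈ A
    exact hdA _ (htkA a ha)
  have hse : ∀ a ∈ A, σ a = σ' a := by
    intro a ha
    show m.perm ((triv (k+1)).perm a) = (down m).perm ((triv k).perm a)
    rw [hte a ha, hme _ (htkA a ha)]
  unfold charge
  rw [show triv (k+1-1) = triv k from rfl]
  rw [← hσ, ← hσ', hgo]
  set M := sSup (gammaOrbit (down m) v) with hMdef
  have hMA' : M ∈ A := by rw [hMdef, ← hgo]; exact hMA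
  constructor
  · intro h
    have h2 := MulAction.mem_orbit_symm.mp h
    have h3 := (zpow_orbit_transfer hAfin hsA hse hvA h2).2
    exact MulAction.mem_orbit_symm.mp h3
  · intro h
    have h2 := MulAction.mem_orbit_symm.mp h
    have h3 := (zpow_orbit_transfer hAfin hs'A
      (fun a ha => (hse a ha).symm) hvA h2).2
    exact MulAction.mem_orbit_symm.mp h3

end PairPartition


open scoped Classical
namespace PairPartition
variable {k : ℕ}

lemma applyFacts_nil (m : PairPartition k) : applyFacts [] m = m := rfl

lemma flip_nil (m : PairPartition k) : flip m [] = 0 := by rw [flip]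

lemma flip_cons (m : PairPartition k) (t : ℕ × ℕ) (l : List (ℕ × ℕ)) :
    flip m (t :: l) =
      (if charge (applyFacts l m) t.1 ↔ charge (applyFacts l m) t.2 then 0 else 1)
        + flip m l := by rw [flip]

lemma applyFacts_cons (t : ℕ × ℕ) (l : List (ℕ × ℕ)) (m : PairPartition k) :
    applyFacts (t :: l) m = swapAct t.1 t.2 (applyFacts l m) := rfl

lemma applyFacts_append_single (l : List (ℕ × ℕ)) (t : ℕ × ℕ) (m : PairPartition k) :
    applyFacts (l ++ [t]) m = applyFacts l (swapAct t.1 t.2 m) := by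
  unfold applyFacts
  rw [List.foldr_append]
  rfl

lemma flip_append_single (m : PairPartition k) (l : List (ℕ × ℕ)) (t : ℕ × ℕ) :
    flip m (l ++ [t]) =
      flip (swapAct t.1 t.2 m) l + (if charge m t.1 ↔ charge m t.2 then 0 else 1) := by
  induction l with
  | nil =>
    show flip m [t] = _
    rw [flip_cons, flip_nil, flip_nil, applyFacts_nil]
    ring
  | cons a l ih =>
    show flip m (a :: (l ++ [t])) = _
    rw [flip_cons, flip_cons, ih, applyFacts_append_single]
    ring

/-- low swaps commute with `down` -/
lemma down_swapAct (m : PairPartition (k+1)) (hpair : m.f (2*(k+1)-1) = 2*(k+1))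
    {i j : ℕ} (hi1 : 1 ≤ i) (hi2 : i ≤ 2*k) (hj1 : 1 ≤ j) (hj2 : j ≤ 2*k) :
    down (swapAct i j m) = swapAct i j (down m) := by
  have hpair2 : (swapAct i j m).f (2*(k+1)-1) = 2*(k+1) := by
    have := (swapAct_top m hi2 hj2).mpr (by
      have h' : (2:ℕ)*(k+1)-1 = 2*k+1 := by omega
      rw [h'] at hpair; exact hpair)
    have h' : (2:ℕ)*(k+1)-1 = 2*k+1 := by omega
    rw [h']; exact this
  apply ext'; funext a
  have hswap_fix : ∀ x : ℕ, x = 2*(k+1)-1 ∨ x = 2*(k+1) → Equiv.swap i j x = x := by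
    intro x hx
    apply Equiv.swap_apply_of_ne_of_ne <;> omega
  have hrange : (1 ≤ i ∧ i ≤ 2*(k+1) ∧ 1 ≤ j ∧ j ≤ 2*(k+1)) := by omega
  have hrange' : (1 ≤ i ∧ i ≤ 2*k ∧ 1 ≤ j ∧ j ≤ 2*k) := by omega
  rw [down_f _ hpair2]
  rw [swapAct_f (down m) hrange']
  by_cases ha : a = 2*(k+1)-1 ∨ a = 2*(k+1)
  · rw [if_pos ha]
    rw [hswap_fix a ha]
    rw [down_f _ hpair, if_pos ha, hswap_fix a ha]
  · rw [if_neg ha]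
    rw [swapAct_f m hrange]
    congr 1
    have hsa : Equiv.swap i j a ≠ 2*(k+1)-1 ∧ Equiv.swap i j a ≠ 2*(k+1) := by
      constructor <;> intro hc
      · have := congrArg (Equiv.swap i j) hc
        rw [Equiv.swap_apply_self, hswap_fix _ (Or.inl rfl)] at this
        exact ha (Or.inl this)
      · have := congrArg (Equiv.swap i j) hc
        rw [Equiv.swap_apply_self, hswap_fix _ (Or.inr rfl)] at this
        exact ha (Or.inr this)
    rw [down_f _ hpair, if_neg (not_or.mpr hsa)]

/-- predicate: all entries are "low" transpositions -/
def LowFacts (k : ℕ) (l : List (ℕ × ℕ)) : Prop :=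
  ∀ t ∈ l, 1 ≤ t.1 ∧ t.1 ≤ 2*k ∧ 1 ≤ t.2 ∧ t.2 ≤ 2*k

lemma applyFacts_top_iff (m : PairPartition (k+1)) {l : List (ℕ × ℕ)}
    (hl : LowFacts k l) :
    (applyFacts l m).f (2*k+1) = 2*(k+1) ↔ m.f (2*k+1) = 2*(k+1) := by
  induction l with
  | nil => rw [applyFacts_nil]
  | cons t l ih =>
    have ht := hl t (by simp)
    have hl' : LowFacts k l := fun s hs => hl s (List.mem_cons_of_mem _ hs)
    rw [applyFacts_cons]
    rw [swapAct_top _ (by omega) (by omega)]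
    exact ih hl'

lemma down_applyFacts (m : PairPartition (k+1)) (hpair : m.f (2*(k+1)-1) = 2*(k+1))
    {l : List (ℕ × ℕ)} (hl : LowFacts k l) :
    down (applyFacts l m) = applyFacts l (down m) := by
  induction l with
  | nil => rw [applyFacts_nil, applyFacts_nil]
  | cons t l ih =>
    have ht := hl t (by simp)
    have hl' : LowFacts k l := fun s hs => hl s (List.mem_cons_of_mem _ hs)
    rw [applyFacts_cons, applyFacts_cons]
    have hpairl : (applyFacts l m).f (2*(k+1)-1) = 2*(k+1) := by
      have h' : (2:ℕ)*(k+1)-1 = 2*k+1 := by omega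
      rw [h']
      rw [applyFacts_top_iff m hl']
      rw [← h']; exact hpair
    rw [down_swapAct _ hpairl (by omega) (by omega) (by omega) (by omega), ih hl']

/-- flip is unchanged by passing to `down` for low factorisation lists -/
lemma flip_down (m : PairPartition (k+1)) (hpair : m.f (2*(k+1)-1) = 2*(k+1))
    {l : List (ℕ × ℕ)} (hl : LowFacts k l) :
    flip m l = flip (down m) l := by
  induction l with
  | nil => rfl
  | cons t l ih =>
    have ht := hl t (by simp)
    have hl' : LowFacts k l := fun s hs => hl s (List.mem_cons_of_mem _ hs)
    rw [flip_cons, flip_cons, ← ih hl']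
    congr 1
    have hpairl : (applyFacts l m).f (2*k+1) = 2*(k+1) := by
      rw [applyFacts_top_iff m hl']
      have h' : (2:ℕ)*(k+1)-1 = 2*k+1 := by omega
      rw [← h']; exact hpair
    have hc1 := charge_down (applyFacts l m) hpairl (v := t.1) (by omega) (by omega)
    have hc2 := charge_down (applyFacts l m) hpairl (v := t.2) (by omega) (by omega)
    rw [down_applyFacts m hpair hl'] at hc1 hc2
    rw [hc1, hc2]

end PairPartition


open scoped Classical
namespace PairPartition
variable {k : ℕ}

lemma sorted_le_getLast {l : List ℕ} (h : l.Pairwise (· ≤ ·)) (hne : l ≠ []) {x : ℕ}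
    (hx : x ∈ l) : x ≤ l.getLast hne := by
  induction l with
  | nil => exact absurd rfl hne
  | cons a l ih =>
    rcases List.eq_nil_or_concat l with rfl | _
    · simp at hx
      subst hx
      simp [List.getLast]
    · have hlne : l ≠ [] := by
        rintro rfl
        simp_all
      rw [List.getLast_cons hlne]
      rw [List.pairwise_cons] at h
      rcases List.mem_cons.mp hx with rfl | hx'
      · exact h.1 _ (List.getLast_mem hlne)
      · exact ih h.2 hlne hx'

lemma mem_listsLen {S : Finset (ℕ × ℕ)} {r : ℕ} {l : List (ℕ × ℕ)} :
    l ∈ listsLen S r ↔ l.length = r ∧ ∀ x ∈ l, x ∈ S := by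
  induction r generalizing l with
  | zero =>
    show l ∈ ({[]} : Finset _) ↔ _
    simp only [Finset.mem_singleton]
    constructor
    · rintro rfl; simp
    · rintro ⟨h1, -⟩; exact List.eq_nil_of_length_eq_zero h1
  | succ n ih =>
    show l ∈ (S ×ˢ listsLen S n).image _ ↔ _
    rw [Finset.mem_image]
    constructor
    · rintro ⟨⟨a, l'⟩, hp, rfl⟩
      rw [Finset.mem_product] at hp
      obtain ⟨ha, hl'⟩ := hp
      obtain ⟨hlen, hmem⟩ := ih.mp hl'
      refine ⟨by simp [hlen], ?_⟩
      intro x hx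
      rcases List.mem_cons.mp hx with rfl | hx'
      · exact ha
      · exact hmem x hx'
    · rintro ⟨hlen, hmem⟩
      match l with
      | [] => simp at hlen
      | a :: l' =>
        refine ⟨⟨a, l'⟩, ?_, rfl⟩
        rw [Finset.mem_product]
        refine ⟨hmem a (by simp), ih.mpr ⟨by simpa using hlen, fun x hx => hmem x (by simp [hx])⟩⟩

lemma mem_monoFinset {m : PairPartition k} {r : ℕ} {l : List (ℕ × ℕ)} :
    l ∈ monoFinset m r ↔ l.length = r ∧ IsMonoFact m l := by
  unfold monoFinset
  rw [Finset.mem_filter, mem_listsLen]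
  constructor
  · rintro ⟨⟨h1, -⟩, h2⟩; exact ⟨h1, h2⟩
  · rintro ⟨h1, h2⟩
    refine ⟨⟨h1, ?_⟩, h2⟩
    intro x hx
    have := h2.1 x hx
    rw [Finset.mem_product, Finset.mem_Icc, Finset.mem_Icc]
    omega

/-- entries of a no-top monotone factorisation at level k+1 are low -/
lemma lowFacts_of_notop {m : PairPartition (k+1)} {l : List (ℕ × ℕ)}
    (h : IsMonoFact m l) (hnt : (2*k+1) ∉ l.map Prod.snd) : LowFacts k l := by
  intro t ht
  have h1 := h.1 t ht
  have h2 : t.2 ≠ 2*k+1 := by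
    intro hc
    exact hnt (by rw [← hc] at hnt ⊢; exact List.mem_map_of_mem ht)
  have hodd := h1.2.2.2
  rcases hodd with ⟨c, hc⟩
  omega

/-- the no-top monotone factorisations at level k+1 are the monotone factorisations
of the descended partition -/
lemma notop_monoFinset (m : PairPartition (k+1)) (hpair : m.f (2*k+1) = 2*(k+1)) (r : ℕ) :
    (monoFinset m r).filter (fun l => (2*k+1) ∉ l.map Prod.snd)
      = monoFinset (down m) r := by
  have hpair' : m.f (2*(k+1)-1) = 2*(k+1) := by
    have h' : (2:ℕ)*(k+1)-1 = 2*k+1 := by omega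
    rw [h']; exact hpair
  ext l
  rw [Finset.mem_filter, mem_monoFinset, mem_monoFinset]
  constructor
  · rintro ⟨⟨hlen, hmf⟩, hnt⟩
    have hlow := lowFacts_of_notop hmf hnt
    refine ⟨hlen, ?_, hmf.2.1, ?_⟩
    · intro t ht
      have h1 := hmf.1 t ht
      have h2 := hlow t ht
      exact ⟨h1.1, h1.2.1, by omega, h1.2.2.2⟩
    · rw [← down_applyFacts m hpair' hlow, hmf.2.2]
      exact down_triv
  · rintro ⟨hlen, hmf⟩
    have hlow : LowFacts k l := by
      intro t ht
      have h1 := hmf.1 t ht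
      omega
    have hnt : (2*k+1) ∉ l.map Prod.snd := by
      intro hc
      rw [List.mem_map] at hc
      obtain ⟨t, ht, hts⟩ := hc
      have := hmf.1 t ht
      omega
    refine ⟨⟨hlen, ?_, hmf.2.1, ?_⟩, hnt⟩
    · intro t ht
      have h1 := hmf.1 t ht
      refine ⟨h1.1, h1.2.1, by omega, h1.2.2.2⟩
    · apply eq_triv_of_down (applyFacts l m)
      · have h' : (2:ℕ)*(k+1)-1 = 2*k+1 := by omega
        rw [h']
        rw [applyFacts_top_iff m hlow]
        exact hpair
      · rw [down_applyFacts m hpair' hlow, hmf.2.2]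
        rfl
  -- done

/-- if no-top factorisations exist then m has the top pair -/
lemma pair_of_notop {m : PairPartition (k+1)} {l : List (ℕ × ℕ)}
    (h : IsMonoFact m l) (hnt : (2*k+1) ∉ l.map Prod.snd) :
    m.f (2*k+1) = 2*(k+1) := by
  have hlow := lowFacts_of_notop h hnt
  rw [← applyFacts_top_iff m hlow, h.2.2]
  exact triv_top

/-- hive bound for low lists -/
lemma hive_le {l : List (ℕ × ℕ)} (h : ∀ t ∈ l, t.2 ≤ 2*k ∧ Odd t.2) : hive l ≤ k := by
  unfold hive
  have hsub : (l.map Prod.snd).toFinset ⊆ (Finset.range k).image (fun j => 2*j+1) := by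
    intro x hx
    rw [List.mem_toFinset, List.mem_map] at hx
    obtain ⟨t, ht, rfl⟩ := hx
    obtain ⟨h1, c, hc⟩ := h t ht
    rw [Finset.mem_image]
    exact ⟨c, Finset.mem_range.mpr (by omega), by omega⟩
  calc (l.map Prod.snd).toFinset.card ≤ _ := Finset.card_le_card hsub
    _ ≤ k := (Finset.card_image_le).trans (by simp)

end PairPartition


open scoped Classical
namespace PairPartition
variable {k : ℕ}

lemma sorted_le_getLastD {l : List ℕ} (h : l.Pairwise (· ≤ ·)) {x : ℕ}
    (hx : x ∈ l) (d : ℕ) : x ≤ l.getLastD d := by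
  have hne : l ≠ [] := List.ne_nil_of_mem hx
  obtain ⟨l', a, hc⟩ := List.eq_nil_or_concat l |>.resolve_left hne
  rw [List.concat_eq_append] at hc
  subst hc
  rw [List.getLastD_concat]
  rcases List.mem_append.mp hx with hx' | hx'
  · have := List.pairwise_append.mp h
    exact this.2.2 x hx' a (by simp)
  · simp at hx'
    omega

lemma last_top {m : PairPartition (k+1)} {l' : List (ℕ × ℕ)} {a : ℕ × ℕ}
    (hmf : IsMonoFact m (l' ++ [a])) (htop : (2*k+1) ∈ (l' ++ [a]).map Prod.snd) :
    a.2 = 2*k+1 := by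
  have ha := hmf.1 a (by simp)
  obtain ⟨ha1, ha2, ha3, c, hc⟩ := ha
  have hle := sorted_le_getLastD hmf.2.1 htop 0
  have hg : ((l' ++ [a]).map Prod.snd).getLastD 0 = a.2 := by
    rw [List.map_append]
    exact List.getLastD_concat
  rw [hg] at hle
  omega

lemma concat_of_ne_nil {l : List (ℕ × ℕ)} (h : l ≠ []) : ∃ l' a, l = l' ++ [a] := by
  obtain ⟨l', a, hc⟩ := List.eq_nil_or_concat l |>.resolve_left h
  rw [List.concat_eq_append] at hc
  exact ⟨l', a, hc⟩

lemma top_sum (m : PairPartition (k+1)) (r : ℕ) {M : Type*} [AddCommMonoid M]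
    (F : List (ℕ × ℕ) → M) :
    ∑ l ∈ (monoFinset m (r+1)).filter (fun l => (2*k+1) ∈ l.map Prod.snd), F l
      = ∑ i ∈ Finset.Icc 1 (2*k), ∑ l ∈ monoFinset (swapAct i (2*k+1) m) r,
          F (l ++ [(i, 2*k+1)]) := by
  rw [← Finset.sum_sigma _ _ (fun p => F (p.2 ++ [(p.1, 2*k+1)]))]
  apply Finset.sum_nbij' (i := fun l => (⟨(l.getLastD (0,0)).1, l.dropLast⟩ :
      Σ _ : ℕ, List (ℕ × ℕ))) (j := fun p => p.2 ++ [(p.1, 2*k+1)])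
  -- hi
  · intro l hl
    rw [Finset.mem_filter, mem_monoFinset] at hl
    obtain ⟨⟨hlen, hmf⟩, htop⟩ := hl
    obtain ⟨l', a, rfl⟩ := concat_of_ne_nil (l := l) (by rintro rfl; simp at hlen)
    have ha2 := last_top hmf htop
    obtain ⟨ha1, ha2', ha3, hodd⟩ := hmf.1 a (by simp)
    rw [Finset.mem_sigma]
    refine ⟨?_, ?_⟩ <;> dsimp only
    · rw [List.getLastD_concat, Finset.mem_Icc]
      omega
    · rw [List.getLastD_concat, List.dropLast_concat, mem_monoFinset]
      refine ⟨by simpa using hlen, ?_, ?_, ?_⟩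
      · intro t ht
        exact hmf.1 t (by simp [ht])
      · have := hmf.2.1
        rw [List.map_append] at this
        exact this.sublist (List.sublist_append_left _ _)
      · have := hmf.2.2
        rw [applyFacts_append_single] at this
        rw [← ha2]
        exact this
  -- hj
  · rintro ⟨i, l⟩ hp
    rw [Finset.mem_sigma] at hp
    obtain ⟨hi, hl⟩ := hp
    dsimp only at hi hl ⊢
    rw [Finset.mem_Icc] at hi
    obtain ⟨hi1, hi2⟩ := hi
    rw [mem_monoFinset] at hl
    obtain ⟨hlen, hmf⟩ := hl
    rw [Finset.mem_filter, mem_monoFinset]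
    refine ⟨⟨by simp [hlen], ?_, ?_, ?_⟩, ?_⟩
    · intro t ht
      rcases List.mem_append.mp ht with ht' | ht'
      · exact hmf.1 t ht'
      · simp at ht'
        subst ht'
        exact ⟨by omega, by omega, by omega, ⟨k, by omega⟩⟩
    · rw [List.map_append]
      refine List.pairwise_append.mpr ⟨hmf.2.1, List.pairwise_singleton _ _, ?_⟩
      intro x hx b hb
      simp at hb
      subst hb
      rw [List.mem_map] at hx
      obtain ⟨t, ht, rfl⟩ := hx
      obtain ⟨h1, h2, h3, c, hc⟩ := hmf.1 t ht
      omega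
    · rw [applyFacts_append_single]
      exact hmf.2.2
    · rw [List.map_append]
      simp
  -- left inv
  · intro l hl
    rw [Finset.mem_filter, mem_monoFinset] at hl
    obtain ⟨⟨hlen, hmf⟩, htop⟩ := hl
    obtain ⟨l', a, rfl⟩ := concat_of_ne_nil (l := l) (by rintro rfl; simp at hlen)
    have ha2 := last_top hmf htop
    have ha' : a = (a.1, 2*k+1) := by rw [← ha2]
    dsimp only
    simp only [List.getLastD_concat, List.dropLast_concat]
    rw [← ha']
  -- right inv
  · rintro ⟨i, l⟩ hp
    dsimp only
    simp only [List.getLastD_concat, List.dropLast_concat]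
  -- values
  · intro l hl
    rw [Finset.mem_filter, mem_monoFinset] at hl
    obtain ⟨⟨hlen, hmf⟩, htop⟩ := hl
    obtain ⟨l', a, rfl⟩ := concat_of_ne_nil (l := l) (by rintro rfl; simp at hlen)
    have ha2 := last_top hmf htop
    have ha' : a = (a.1, 2*k+1) := by rw [← ha2]
    dsimp only
    simp only [List.getLastD_concat, List.dropLast_concat]
    rw [← ha']

end PairPartition


open scoped Classical
open PairPartition

namespace PairPartition

lemma countA_consA (i : ℕ) (l : List WStep) : countA (WStep.A i :: l) = countA l + 1 := by
  simp [countA, List.filter]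
lemma countA_consB (l : List WStep) : countA (WStep.B :: l) = countA l := by
  simp [countA, List.filter]
lemma countA_consC (i : ℕ) (l : List WStep) : countA (WStep.C i :: l) = countA l := by
  simp [countA, List.filter]
lemma countB_consA (i : ℕ) (l : List WStep) : countB (WStep.A i :: l) = countB l := by
  simp [countB, List.filter]
lemma countB_consB (l : List WStep) : countB (WStep.B :: l) = countB l + 1 := by
  simp [countB, List.filter]
lemma countB_consC (i : ℕ) (l : List WStep) : countB (WStep.C i :: l) = countB l := by
  simp [countB, List.filter]
lemma countC_consA (i : ℕ) (l : List WStep) : countC (WStep.A i :: l) = countC l := by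
  simp [countC, List.filter]
lemma countC_consB (l : List WStep) : countC (WStep.B :: l) = countC l := by
  simp [countC, List.filter]
lemma countC_consC (i : ℕ) (l : List WStep) : countC (WStep.C i :: l) = countC l + 1 := by
  simp [countC, List.filter]
lemma countA_nil : countA [] = 0 := rfl
lemma countB_nil : countB [] = 0 := rfl
lemma countC_nil : countC [] = 0 := rfl

lemma counts_length (l : List WStep) : l.length = countA l + countB l + countC l := by
  induction l with
  | nil => rfl
  | cons s l ih =>
    cases s with
    | A i => rw [countA_consA, countB_consA, countC_consA]; simp [ih]; omega
    | B => rw [countA_consB, countB_consB, countC_consB]; simp [ih]; omega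
    | C i => rw [countA_consC, countB_consC, countC_consC]; simp [ih]; omega

lemma isPathTo_zero (m : PairPartition 0) (ρ : List WStep) :
    IsPathTo 0 m ρ ↔ ρ = [] := by
  cases ρ with
  | nil => simp [IsPathTo]
  | cons s ρ =>
    constructor
    · intro h; cases s <;> exact absurd h (by simp [IsPathTo])
    · intro h; simp at h

lemma isPathTo_nil_succ (k : ℕ) (m : PairPartition (k+1)) :
    ¬ IsPathTo (k+1) m [] := by simp [IsPathTo]

/-- the Finset of possible steps at level ≤ k -/
noncomputable def stepSet (k : ℕ) : Finset WStep :=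
  insert WStep.B (((Finset.Icc 1 (2*k)).image WStep.A) ∪ ((Finset.Icc 1 (2*k)).image WStep.C))

lemma stepSet_mono {k k' : ℕ} (h : k ≤ k') : stepSet k ⊆ stepSet k' := by
  unfold stepSet
  intro s hs
  simp only [Finset.mem_insert, Finset.mem_union, Finset.mem_image, Finset.mem_Icc] at hs ⊢
  rcases hs with h1 | ⟨i, hi, rfl⟩ | ⟨i, hi, rfl⟩
  · exact Or.inl h1
  · exact Or.inr (Or.inl ⟨i, by omega, rfl⟩)
  · exact Or.inr (Or.inr ⟨i, by omega, rfl⟩)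

lemma isPathTo_facts : ∀ (ρ : List WStep) (k : ℕ) (m : PairPartition k),
    IsPathTo k m ρ → countB ρ + countC ρ = k ∧ ∀ s ∈ ρ, s ∈ stepSet k := by
  intro ρ
  induction ρ with
  | nil =>
    intro k m h
    match k with
    | 0 => exact ⟨rfl, by simp⟩
    | k+1 => exact absurd h (isPathTo_nil_succ k m)
  | cons s ρ ih =>
    intro k m h
    match k with
    | 0 => cases s <;> exact absurd h (by simp [IsPathTo])
    | k+1 =>
      cases s with
      | A i =>
        obtain ⟨h1, h2, h3⟩ := h
        obtain ⟨hc, hmem⟩ := ih (k+1) _ h3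
        refine ⟨by rw [countB_consA, countC_consA]; exact hc, ?_⟩
        intro s hs
        rcases List.mem_cons.mp hs with rfl | hs'
        · unfold stepSet
          simp only [Finset.mem_insert, Finset.mem_union, Finset.mem_image, Finset.mem_Icc]
          exact Or.inr (Or.inl ⟨i, by omega, rfl⟩)
        · exact hmem s hs'
      | B =>
        obtain ⟨h1, h2⟩ := h
        obtain ⟨hc, hmem⟩ := ih k _ h2
        refine ⟨by rw [countB_consB, countC_consB]; omega, ?_⟩
        intro s hs
        rcases List.mem_cons.mp hs with rfl | hs'
        · unfold stepSet; simp
        · exact stepSet_mono (by omega) (hmem s hs')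
      | C i =>
        obtain ⟨h1, h2, h3, h4⟩ := h
        obtain ⟨hc, hmem⟩ := ih k _ h4
        refine ⟨by rw [countB_consC, countC_consC]; omega, ?_⟩
        intro s hs
        rcases List.mem_cons.mp hs with rfl | hs'
        · unfold stepSet
          simp only [Finset.mem_insert, Finset.mem_union, Finset.mem_image, Finset.mem_Icc]
          exact Or.inr (Or.inr ⟨i, by omega, rfl⟩)
        · exact stepSet_mono (by omega) (hmem s hs')

/-- all lists of WSteps of length n with entries in S -/
noncomputable def wlistsLen (S : Finset WStep) : ℕ → Finset (List WStep)
  | 0 => {[]}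
  | n + 1 => (S ×ˢ wlistsLen S n).image fun p => p.1 :: p.2

lemma mem_wlistsLen {S : Finset WStep} {r : ℕ} {l : List WStep} :
    l ∈ wlistsLen S r ↔ l.length = r ∧ ∀ x ∈ l, x ∈ S := by
  induction r generalizing l with
  | zero =>
    show l ∈ ({[]} : Finset _) ↔ _
    simp only [Finset.mem_singleton]
    constructor
    · rintro rfl; simp
    · rintro ⟨h1, -⟩; exact List.eq_nil_of_length_eq_zero h1
  | succ n ih =>
    show l ∈ (S ×ˢ wlistsLen S n).image _ ↔ _
    rw [Finset.mem_image]
    constructor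
    · rintro ⟨⟨a, l'⟩, hp, rfl⟩
      rw [Finset.mem_product] at hp
      obtain ⟨ha, hl'⟩ := hp
      obtain ⟨hlen, hmem⟩ := ih.mp hl'
      refine ⟨by simp [hlen], ?_⟩
      intro x hx
      rcases List.mem_cons.mp hx with rfl | hx'
      · exact ha
      · exact hmem x hx'
    · rintro ⟨hlen, hmem⟩
      match l with
      | [] => simp at hlen
      | a :: l' =>
        refine ⟨⟨a, l'⟩, ?_, rfl⟩
        rw [Finset.mem_product]
        exact ⟨hmem a (by simp), ih.mpr ⟨by simpa using hlen,
          fun x hx => hmem x (by simp [hx])⟩⟩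

/-- the Finset of paths from m to the empty pair partition with n type A/C steps -/
noncomputable def pathFinset (k : ℕ) (m : PairPartition k) (n : ℕ) : Finset (List WStep) :=
  ((Finset.range (n+k+1)).biUnion (wlistsLen (stepSet k))).filter
    (fun ρ => IsPathTo k m ρ ∧ countA ρ + countC ρ = n)

lemma mem_pathFinset {k n : ℕ} {m : PairPartition k} {ρ : List WStep} :
    ρ ∈ pathFinset k m n ↔ IsPathTo k m ρ ∧ countA ρ + countC ρ = n := by
  unfold pathFinset
  rw [Finset.mem_filter]
  constructor
  · rintro ⟨-, h⟩; exact h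
  · rintro ⟨h1, h2⟩
    refine ⟨?_, h1, h2⟩
    obtain ⟨hc, hmem⟩ := isPathTo_facts ρ k m h1
    rw [Finset.mem_biUnion]
    refine ⟨ρ.length, ?_, mem_wlistsLen.mpr ⟨rfl, hmem⟩⟩
    rw [Finset.mem_range, counts_length ρ]
    omega

/-- the coefficients of WgBT as finite sums over paths -/
lemma coeff_WgBT (k : ℕ) (m : PairPartition k) (n : ℕ) :
    (PowerSeries.coeff n) (WgBT k m)
      = ∑ ρ ∈ pathFinset k m n,
          (-1 : MvPolynomial (Fin 2) ℤ) ^ countA ρ * (MvPolynomial.X 1) ^ countB ρ *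
            pathWeight (MvPolynomial.X 0 : MvPolynomial (Fin 2) ℤ) k m ρ := by
  unfold WgBT
  rw [PowerSeries.coeff_mk]
  exact finsum_cond_eq_sum_of_cond_iff _ (fun {ρ} _ => mem_pathFinset.symm)

end PairPartition


open scoped Classical
namespace PairPartition
variable {k : ℕ}

lemma isPathTo_consA (m : PairPartition (k+1)) (i : ℕ) (ρ : List WStep) :
    IsPathTo (k+1) m (WStep.A i :: ρ) ↔
      1 ≤ i ∧ i ≤ 2*k ∧ IsPathTo (k+1) (swapAct i (2*k+1) m) ρ := by
  have e1 : 2*(k+1)-2 = 2*k := by omega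
  have e2 : 2*(k+1)-1 = 2*k+1 := by omega
  show (1 ≤ i ∧ i ≤ 2*(k+1)-2 ∧ IsPathTo (k+1) (swapAct i (2*(k+1)-1) m) ρ) ↔ _
  rw [e1, e2]

lemma isPathTo_consB (m : PairPartition (k+1)) (ρ : List WStep) :
    IsPathTo (k+1) m (WStep.B :: ρ) ↔
      m.f (2*k+1) = 2*(k+1) ∧ IsPathTo k (down m) ρ := by
  have e2 : 2*(k+1)-1 = 2*k+1 := by omega
  show (m.f (2*(k+1)-1) = 2*(k+1) ∧ IsPathTo k (down m) ρ) ↔ _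
  rw [e2]

lemma isPathTo_consC (m : PairPartition (k+1)) (i : ℕ) (ρ : List WStep) :
    IsPathTo (k+1) m (WStep.C i :: ρ) ↔
      1 ≤ i ∧ i ≤ 2*k ∧ m.f i = 2*(k+1) ∧
        IsPathTo k (down (swapAct i (2*k+1) m)) ρ := by
  have e1 : 2*(k+1)-2 = 2*k := by omega
  have e2 : 2*(k+1)-1 = 2*k+1 := by omega
  show (1 ≤ i ∧ i ≤ 2*(k+1)-2 ∧ m.f i = 2*(k+1) ∧
      IsPathTo k (down (swapAct i (2*(k+1)-1) m)) ρ) ↔ _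
  rw [e1, e2]

lemma pathWeight_consA {R : Type*} [CommRing R] (b : R) (m : PairPartition (k+1))
    (i : ℕ) (ρ : List WStep) :
    pathWeight b (k+1) m (WStep.A i :: ρ) =
      omegab b m i (2*k+1) * pathWeight b (k+1) (swapAct i (2*k+1) m) ρ := by
  have e2 : 2*(k+1)-1 = 2*k+1 := by omega
  show omegab b m i (2*(k+1)-1) * pathWeight b (k+1) (swapAct i (2*(k+1)-1) m) ρ = _
  rw [e2]

lemma pathWeight_consB {R : Type*} [CommRing R] (b : R) (m : PairPartition (k+1))
    (ρ : List WStep) :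
    pathWeight b (k+1) m (WStep.B :: ρ) = pathWeight b k (down m) ρ := rfl

lemma pathWeight_consC {R : Type*} [CommRing R] (b : R) (m : PairPartition (k+1))
    (i : ℕ) (ρ : List WStep) :
    pathWeight b (k+1) m (WStep.C i :: ρ) =
      pathWeight b k (down (swapAct i (2*k+1) m)) ρ := by
  have e2 : 2*(k+1)-1 = 2*k+1 := by omega
  show pathWeight b k (down (swapAct i (2*(k+1)-1) m)) ρ = _
  rw [e2]

lemma pathWeight_nil {R : Type*} [CommRing R] (b : R) (k : ℕ) (m : PairPartition k) :
    pathWeight b k m [] = 1 := by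
  cases k <;> rfl

/-- splitting the path Finset according to the first step -/
lemma pathFinset_split (n : ℕ) (m : PairPartition (k+1)) :
    pathFinset (k+1) m (n+1) =
      ((Finset.Icc 1 (2*k)).biUnion (fun i =>
        (pathFinset (k+1) (swapAct i (2*k+1) m) n).image (WStep.A i :: ·)))
      ∪ (if m.f (2*k+1) = 2*(k+1) then
          (pathFinset k (down m) (n+1)).image (WStep.B :: ·) else ∅)
      ∪ ((Finset.Icc 1 (2*k)).filter (fun i => m.f i = 2*(k+1))).biUnion (fun i =>
          (pathFinset k (down (swapAct i (2*k+1) m)) n).image (WStep.C i :: ·)) := by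
  ext ρ
  rw [mem_pathFinset]
  simp only [Finset.mem_union, Finset.mem_biUnion, Finset.mem_image, Finset.mem_filter,
    Finset.mem_Icc]
  constructor
  · rintro ⟨hp, hc⟩
    match ρ with
    | [] => exact absurd hp (isPathTo_nil_succ k m)
    | WStep.A i :: ρ =>
      obtain ⟨h1, h2, h3⟩ := (isPathTo_consA m i ρ).mp hp
      rw [countA_consA, countC_consA] at hc
      exact Or.inl (Or.inl ⟨i, ⟨h1, h2⟩, ρ, mem_pathFinset.mpr ⟨h3, by omega⟩, rfl⟩)
    | WStep.B :: ρ =>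
      obtain ⟨h1, h2⟩ := (isPathTo_consB m ρ).mp hp
      rw [countA_consB, countC_consB] at hc
      refine Or.inl (Or.inr ?_)
      rw [if_pos h1]
      rw [Finset.mem_image]
      exact ⟨ρ, mem_pathFinset.mpr ⟨h2, hc⟩, rfl⟩
    | WStep.C i :: ρ =>
      obtain ⟨h1, h2, h3, h4⟩ := (isPathTo_consC m i ρ).mp hp
      rw [countA_consC, countC_consC] at hc
      exact Or.inr ⟨i, ⟨⟨h1, h2⟩, h3⟩, ρ, mem_pathFinset.mpr ⟨h4, by omega⟩, rfl⟩
  · rintro ((⟨i, ⟨h1, h2⟩, ρ', hρ', rfl⟩ | hB) | ⟨i, ⟨⟨h1, h2⟩, h3⟩, ρ', hρ', rfl⟩)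
    · obtain ⟨hp, hc⟩ := mem_pathFinset.mp hρ'
      refine ⟨(isPathTo_consA m i ρ').mpr ⟨h1, h2, hp⟩, ?_⟩
      rw [countA_consA, countC_consA]
      omega
    · by_cases hpair : m.f (2*k+1) = 2*(k+1)
      · rw [if_pos hpair, Finset.mem_image] at hB
        obtain ⟨ρ', hρ', rfl⟩ := hB
        obtain ⟨hp, hc⟩ := mem_pathFinset.mp hρ'
        refine ⟨(isPathTo_consB m ρ').mpr ⟨hpair, hp⟩, ?_⟩
        rw [countA_consB, countC_consB]
        exact hc
      · rw [if_neg hpair] at hB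
        simp at hB
    · obtain ⟨hp, hc⟩ := mem_pathFinset.mp hρ'
      refine ⟨(isPathTo_consC m i ρ').mpr ⟨h1, h2, h3, hp⟩, ?_⟩
      rw [countA_consC, countC_consC]
      omega

end PairPartition


open scoped Classical
namespace PairPartition
variable {k : ℕ}

lemma head?_of_mem_image_cons {s : WStep} {t : Finset (List WStep)} {ρ : List WStep}
    (h : ρ ∈ t.image (s :: ·)) : ρ.head? = some s := by
  obtain ⟨ρ', -, rfl⟩ := Finset.mem_image.mp h
  rfl

lemma sum_path_split {M : Type*} [AddCommMonoid M] (n : ℕ) (m : PairPartition (k+1))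
    (G : List WStep → M) :
    ∑ ρ ∈ pathFinset (k+1) m (n+1), G ρ =
      (∑ i ∈ Finset.Icc 1 (2*k),
          ∑ ρ ∈ pathFinset (k+1) (swapAct i (2*k+1) m) n, G (WStep.A i :: ρ))
      + (if m.f (2*k+1) = 2*(k+1) then
          ∑ ρ ∈ pathFinset k (down m) (n+1), G (WStep.B :: ρ) else 0)
      + ∑ i ∈ (Finset.Icc 1 (2*k)).filter (fun i => m.f i = 2*(k+1)),
          ∑ ρ ∈ pathFinset k (down (swapAct i (2*k+1) m)) n, G (WStep.C i :: ρ) := by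
  rw [pathFinset_split n m]
  have hdisj1 : Disjoint
      ((Finset.Icc 1 (2*k)).biUnion (fun i =>
        (pathFinset (k+1) (swapAct i (2*k+1) m) n).image (WStep.A i :: ·)))
      (if m.f (2*k+1) = 2*(k+1) then
        (pathFinset k (down m) (n+1)).image (WStep.B :: ·) else ∅) := by
    split_ifs with h
    · rw [Finset.disjoint_left]
      intro ρ hA hB
      have h2 := head?_of_mem_image_cons hB
      obtain ⟨i, -, hmem⟩ := Finset.mem_biUnion.mp hA
      have h1 := head?_of_mem_image_cons hmem
      rw [h1] at h2
      simp at h2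
    · exact Finset.disjoint_empty_right _
  have hdisj2 : Disjoint
      (((Finset.Icc 1 (2*k)).biUnion (fun i =>
        (pathFinset (k+1) (swapAct i (2*k+1) m) n).image (WStep.A i :: ·)))
      ∪ (if m.f (2*k+1) = 2*(k+1) then
          (pathFinset k (down m) (n+1)).image (WStep.B :: ·) else ∅))
      (((Finset.Icc 1 (2*k)).filter (fun i => m.f i = 2*(k+1))).biUnion (fun i =>
          (pathFinset k (down (swapAct i (2*k+1) m)) n).image (WStep.C i :: ·))) := by
    rw [Finset.disjoint_left]
    intro ρ hAB hC
    obtain ⟨i, -, hmem⟩ := Finset.mem_biUnion.mp hC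
    have h1 := head?_of_mem_image_cons hmem
    rcases Finset.mem_union.mp hAB with hA | hB
    · obtain ⟨j, -, hmem'⟩ := Finset.mem_biUnion.mp hA
      have h2 := head?_of_mem_image_cons hmem'
      rw [h1] at h2
      simp at h2
    · split_ifs at hB with h
      · have h2 := head?_of_mem_image_cons hB
        rw [h1] at h2
        simp at h2
      · simp at hB
  rw [Finset.sum_union hdisj2, Finset.sum_union hdisj1]
  congr 1
  congr 1
  · -- A part
    rw [Finset.sum_biUnion]
    · apply Finset.sum_congr rfl
      intro i hi
      rw [Finset.sum_image]
      intro x hx y hy hxy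
      simpa using hxy
    · intro i hi j hj hij
      simp only [Function.onFun]
      rw [Finset.disjoint_left]
      intro ρ hx hy
      have h1 := head?_of_mem_image_cons hx
      have h2 := head?_of_mem_image_cons hy
      rw [h1] at h2
      simp at h2
      exact hij h2
  · -- B part
    split_ifs with h
    · rw [Finset.sum_image]
      intro x hx y hy hxy
      simpa using hxy
    · rw [Finset.sum_empty]
  · -- C part
    rw [Finset.sum_biUnion]
    · apply Finset.sum_congr rfl
      intro i hi
      rw [Finset.sum_image]
      intro x hx y hy hxy
      simpa using hxy
    · intro i hi j hj hij
      simp only [Function.onFun]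
      rw [Finset.disjoint_left]
      intro ρ hx hy
      have h1 := head?_of_mem_image_cons hx
      have h2 := head?_of_mem_image_cons hy
      rw [h1] at h2
      simp at h2
      exact hij h2
end PairPartition


open scoped Classical
namespace PairPartition
open MvPolynomial

noncomputable def RHSd (k : ℕ) (m : PairPartition k) (r : ℕ) : MvPolynomial (Fin 2) ℤ :=
  ∑ l ∈ monoFinset m r,
    (X 0 : MvPolynomial (Fin 2) ℤ) ^ flip m l * (X 1 - 1) ^ hive l * (X 1) ^ (k - hive l)

noncomputable def TSd {k : ℕ} (m : PairPartition (k+1)) (r : ℕ) : MvPolynomial (Fin 2) ℤ :=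
  ∑ l ∈ (monoFinset m r).filter (fun l => (2*k+1) ∈ l.map Prod.snd),
    (X 0 : MvPolynomial (Fin 2) ℤ) ^ flip m l * (X 1 - 1) ^ hive l * (X 1) ^ (k+1 - hive l)

variable {k : ℕ}

lemma hive_nil : hive [] = 0 := rfl

lemma monoFinset_zero (k : ℕ) (m : PairPartition k) :
    monoFinset m 0 = if m = triv k then {[]} else ∅ := by
  ext l
  rw [mem_monoFinset]
  split_ifs with h
  · subst h
    simp only [Finset.mem_singleton]
    constructor
    · rintro ⟨h1, -⟩; exact List.eq_nil_of_length_eq_zero h1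
    · rintro rfl
      exact ⟨rfl, by intro t ht; simp at ht, by simp, rfl⟩
  · simp only [Finset.notMem_empty, iff_false]
    rintro ⟨h1, hmf⟩
    have : l = [] := List.eq_nil_of_length_eq_zero h1
    subst this
    exact h hmf.2.2

lemma RHSd_zero (k : ℕ) (m : PairPartition k) :
    RHSd k m 0 = if m = triv k then (X 1 : MvPolynomial (Fin 2) ℤ) ^ k else 0 := by
  unfold RHSd
  rw [monoFinset_zero]
  split_ifs with h
  · rw [Finset.sum_singleton, flip_nil, hive_nil]
    simp
  · rw [Finset.sum_empty]

/-- no-top sum with exponent k -/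
lemma notop_sum_eval (m : PairPartition (k+1)) (r : ℕ) :
    ∑ l ∈ (monoFinset m r).filter (fun l => (2*k+1) ∉ l.map Prod.snd),
      (X 0 : MvPolynomial (Fin 2) ℤ) ^ flip m l * (X 1 - 1) ^ hive l * (X 1) ^ (k - hive l)
    = if m.f (2*k+1) = 2*(k+1) then RHSd k (down m) r else 0 := by
  split_ifs with hpair
  · rw [notop_monoFinset m hpair r]
    unfold RHSd
    apply Finset.sum_congr rfl
    intro l hl
    rw [mem_monoFinset] at hl
    have hlow : LowFacts k l := by
      intro t ht
      have := hl.2.1 t ht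
      omega
    have hp' : m.f (2*(k+1)-1) = 2*(k+1) := by
      have e : (2:ℕ)*(k+1)-1 = 2*k+1 := by omega
      rw [e]
      exact hpair
    rw [flip_down m hp' hlow]
  · rw [Finset.sum_eq_zero]
    intro l hl
    rw [Finset.mem_filter, mem_monoFinset] at hl
    exact absurd (pair_of_notop hl.1.2 hl.2) hpair

/-- no-top sum with exponent k+1 -/
lemma notop_sum_eval' (m : PairPartition (k+1)) (r : ℕ) :
    ∑ l ∈ (monoFinset m r).filter (fun l => (2*k+1) ∉ l.map Prod.snd),
      (X 0 : MvPolynomial (Fin 2) ℤ) ^ flip m l * (X 1 - 1) ^ hive l * (X 1) ^ (k+1 - hive l)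
    = if m.f (2*k+1) = 2*(k+1) then (X 1) * RHSd k (down m) r else 0 := by
  have step : ∀ l ∈ (monoFinset m r).filter (fun l => (2*k+1) ∉ l.map Prod.snd),
      (X 0 : MvPolynomial (Fin 2) ℤ) ^ flip m l * (X 1 - 1) ^ hive l * (X 1) ^ (k+1 - hive l)
      = (X 1) * ((X 0) ^ flip m l * (X 1 - 1) ^ hive l * (X 1) ^ (k - hive l)) := by
    intro l hl
    rw [Finset.mem_filter, mem_monoFinset] at hl
    have hlow := lowFacts_of_notop hl.1.2 hl.2
    have hle : hive l ≤ k := by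
      apply hive_le
      intro t ht
      exact ⟨(hlow t ht).2.2.2, (hl.1.2.1 t ht).2.2.2⟩
    have he : k + 1 - hive l = (k - hive l) + 1 := by omega
    rw [he, pow_succ]
    ring
  rw [Finset.sum_congr rfl step, ← Finset.mul_sum, notop_sum_eval]
  split_ifs with h
  · rfl
  · rw [mul_zero]

lemma RHSd_split (m : PairPartition (k+1)) (r : ℕ) :
    RHSd (k+1) m r = TSd m r
      + (if m.f (2*k+1) = 2*(k+1) then (X 1) * RHSd k (down m) r else 0) := by
  unfold RHSd TSd
  rw [← Finset.sum_filter_add_sum_filter_not (monoFinset m r)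
    (fun l => (2*k+1) ∈ l.map Prod.snd)]
  rw [notop_sum_eval']
  rfl

lemma pow_flip_term (c : Prop) [Decidable c] :
    (X 0 : MvPolynomial (Fin 2) ℤ) ^ (if c then 0 else 1) = if c then 1 else (X 0) := by
  split_ifs <;> simp

/-- the recursion for the top sum -/
lemma TSd_rec (m : PairPartition (k+1)) (r : ℕ) :
    TSd m (r+1) = ∑ i ∈ Finset.Icc 1 (2*k),
      omegab (X 0 : MvPolynomial (Fin 2) ℤ) m i (2*k+1) *
        (TSd (swapAct i (2*k+1) m) r
          + (X 1 - 1) * (if (swapAct i (2*k+1) m).f (2*k+1) = 2*(k+1) then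
              RHSd k (down (swapAct i (2*k+1) m)) r else 0)) := by
  unfold TSd
  rw [top_sum m r]
  apply Finset.sum_congr rfl
  intro i hi
  rw [Finset.mem_Icc] at hi
  -- weight transformation
  have key : ∀ l ∈ monoFinset (swapAct i (2*k+1) m) r,
      (X 0 : MvPolynomial (Fin 2) ℤ) ^ flip m (l ++ [(i, 2*k+1)]) *
        (X 1 - 1) ^ hive (l ++ [(i, 2*k+1)]) * (X 1) ^ (k+1 - hive (l ++ [(i, 2*k+1)]))
      = omegab (X 0) m i (2*k+1) *
          (if (2*k+1) ∈ l.map Prod.snd then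
            (X 0) ^ flip (swapAct i (2*k+1) m) l * (X 1 - 1) ^ hive l * (X 1) ^ (k+1 - hive l)
          else
            (X 1 - 1) * ((X 0) ^ flip (swapAct i (2*k+1) m) l * (X 1 - 1) ^ hive l
              * (X 1) ^ (k - hive l))) := by
    intro l hl
    have hfl : flip m (l ++ [(i, 2*k+1)]) = flip (swapAct i (2*k+1) m) l
        + (if charge m i ↔ charge m (2*k+1) then 0 else 1) := flip_append_single m l (i, 2*k+1)
    have hhive : hive (l ++ [(i, 2*k+1)]) =
        (if (2*k+1) ∈ l.map Prod.snd then hive l else hive l + 1) := by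
      unfold hive
      rw [List.map_append, List.toFinset_append]
      show ((l.map Prod.snd).toFinset ∪ [(2*k+1)].toFinset).card = _
      simp only [List.toFinset_cons, List.toFinset_nil, insert_empty_eq]
      rw [Finset.union_comm, ← Finset.insert_eq]
      split_ifs with h
      · rw [Finset.insert_eq_self.mpr (by simp [h])]
      · rw [Finset.card_insert_of_notMem (by simp [h])]
    rw [hfl, pow_add, pow_flip_term]
    unfold omegab
    rw [hhive]
    split_ifs with hc htop htop
    · ring
    · have he : k + 1 - (hive l + 1) = k - hive l := by omega
      rw [he, pow_succ]
      ring
    · ring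
    · have he : k + 1 - (hive l + 1) = k - hive l := by omega
      rw [he, pow_succ]
      ring
  rw [Finset.sum_congr rfl key, ← Finset.mul_sum]
  congr 1
  rw [Finset.sum_ite]
  congr 1
  rw [← Finset.mul_sum, notop_sum_eval]

end PairPartition


open scoped Classical
namespace PairPartition
open MvPolynomial

variable {k : ℕ}

noncomputable def wG (k : ℕ) (m : PairPartition k) (ρ : List WStep) :
    MvPolynomial (Fin 2) ℤ :=
  (-1) ^ (countA ρ) * (X 1) ^ (countB ρ) *
    pathWeight (X 0 : MvPolynomial (Fin 2) ℤ) k m ρ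

lemma coeff_WgBT' (k : ℕ) (m : PairPartition k) (n : ℕ) :
    (PowerSeries.coeff n) (WgBT k m)
      = ∑ ρ ∈ pathFinset k m n, wG k m ρ := coeff_WgBT k m n

lemma wG_nil (k : ℕ) (m : PairPartition k) : wG k m [] = 1 := by
  unfold wG
  rw [countA_nil, countB_nil, pathWeight_nil]
  simp

lemma wG_consA (m : PairPartition (k+1)) (i : ℕ) (ρ : List WStep) :
    wG (k+1) m (WStep.A i :: ρ) =
      -(omegab (X 0 : MvPolynomial (Fin 2) ℤ) m i (2*k+1))
        * wG (k+1) (swapAct i (2*k+1) m) ρ := by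
  unfold wG
  rw [countA_consA, countB_consA, pathWeight_consA]
  ring

lemma wG_consB (m : PairPartition (k+1)) (ρ : List WStep) :
    wG (k+1) m (WStep.B :: ρ) = (X 1) * wG k (down m) ρ := by
  unfold wG
  rw [countA_consB, countB_consB, pathWeight_consB]
  ring

lemma wG_consC (m : PairPartition (k+1)) (i : ℕ) (ρ : List WStep) :
    wG (k+1) m (WStep.C i :: ρ) = wG k (down (swapAct i (2*k+1) m)) ρ := by
  unfold wG
  rw [countA_consC, countB_consC, pathWeight_consC]

lemma pp_zero (m : PairPartition 0) : m = triv 0 := by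
  apply ext'
  funext a
  rw [f_out m (by omega)]
  show a = trivFun 0 a
  unfold trivFun
  rw [if_neg (by omega)]

lemma pathFinset_zeroN (m : PairPartition (k+1)) :
    pathFinset (k+1) m 0 = if m.f (2*k+1) = 2*(k+1) then
      (pathFinset k (down m) 0).image (WStep.B :: ·) else ∅ := by
  ext ρ
  rw [mem_pathFinset]
  constructor
  · rintro ⟨hp, hc⟩
    match ρ with
    | [] => exact absurd hp (isPathTo_nil_succ k m)
    | WStep.A i :: ρ =>
      rw [countA_consA] at hc
      omega
    | WStep.C i :: ρ =>
      rw [countC_consC] at hc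
      omega
    | WStep.B :: ρ =>
      obtain ⟨h1, h2⟩ := (isPathTo_consB m ρ).mp hp
      rw [if_pos h1, Finset.mem_image]
      rw [countA_consB, countC_consB] at hc
      exact ⟨ρ, mem_pathFinset.mpr ⟨h2, hc⟩, rfl⟩
  · intro h
    split_ifs at h with hpair
    · rw [Finset.mem_image] at h
      obtain ⟨ρ', hρ', rfl⟩ := h
      obtain ⟨hp, hc⟩ := mem_pathFinset.mp hρ'
      refine ⟨(isPathTo_consB m ρ').mpr ⟨hpair, hp⟩, ?_⟩
      rw [countA_consB, countC_consB]
      exact hc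
    · simp at h

lemma swapAct_pair_iff (m : PairPartition (k+1)) {i : ℕ} (hi1 : 1 ≤ i) (hi2 : i ≤ 2*k) :
    (swapAct i (2*k+1) m).f (2*k+1) = 2*(k+1) ↔ m.f i = 2*(k+1) := by
  have hr : 1 ≤ i ∧ i ≤ 2*(k+1) ∧ 1 ≤ 2*k+1 ∧ 2*k+1 ≤ 2*(k+1) := by omega
  rw [swapAct_f m hr]
  rw [Equiv.swap_apply_right]
  constructor
  · intro h
    have := congrArg (Equiv.swap i (2*k+1)) h
    rw [Equiv.swap_apply_self, Equiv.swap_apply_of_ne_of_ne (by omega) (by omega)] at this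
    exact this
  · intro h
    rw [h, Equiv.swap_apply_of_ne_of_ne (by omega) (by omega)]

/-- the main coefficient identity -/
theorem coeff_eq : ∀ (k : ℕ) (m : PairPartition k) (n : ℕ),
    (PowerSeries.coeff n) (WgBT k m)
      = (-1) ^ n * RHSd k m n := by
  intro k
  induction k with
  | zero =>
    intro m n
    rw [coeff_WgBT']
    have hpf : pathFinset 0 m n = if n = 0 then {[]} else ∅ := by
      ext ρ
      rw [mem_pathFinset, isPathTo_zero]
      split_ifs with h
      · subst h
        simp only [Finset.mem_singleton]
        constructor
        · rintro ⟨rfl, -⟩; rfl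
        · rintro rfl; exact ⟨rfl, rfl⟩
      · simp only [Finset.notMem_empty, iff_false]
        rintro ⟨rfl, hc⟩
        exact h (by rw [← hc]; rfl)
    rw [hpf]
    rcases Nat.eq_zero_or_pos n with rfl | hn
    · rw [if_pos rfl, Finset.sum_singleton, wG_nil, RHSd_zero, if_pos (pp_zero m)]
      simp
    · rw [if_neg (by omega), Finset.sum_empty]
      have hmono : monoFinset m n = ∅ := by
        ext l
        rw [mem_monoFinset]
        simp only [Finset.notMem_empty, iff_false]
        rintro ⟨hlen, hmf⟩
        match l with
        | [] => simp at hlen; omega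
        | t :: l' =>
          have := hmf.1 t (by simp)
          omega
      unfold RHSd
      rw [hmono, Finset.sum_empty, mul_zero]
  | succ k ihk =>
    intro m n
    induction n generalizing m with
    | zero =>
      rw [coeff_WgBT', pathFinset_zeroN]
      rw [pow_zero, one_mul, RHSd_zero]
      split_ifs with hpair htriv htriv
      · -- pair holds; evaluate the image sum
        rw [Finset.sum_image (by intro x hx y hy h; simpa using h)]
        have hstep : ∀ ρ ∈ pathFinset k (down m) 0,
            wG (k+1) m (WStep.B :: ρ) = (X 1) * wG k (down m) ρ :=
          fun ρ _ => wG_consB m ρ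
        rw [Finset.sum_congr rfl hstep, ← Finset.mul_sum, ← coeff_WgBT', ihk]
        rw [pow_zero, one_mul, RHSd_zero]
        have hdt : down m = triv k := by
          subst htriv
          exact down_triv
        rw [if_pos hdt]
        rw [← pow_succ']
      · -- pair but not triv: down m ≠ triv k
        rw [Finset.sum_image (by intro x hx y hy h; simpa using h)]
        have hstep : ∀ ρ ∈ pathFinset k (down m) 0,
            wG (k+1) m (WStep.B :: ρ) = (X 1) * wG k (down m) ρ :=
          fun ρ _ => wG_consB m ρ
        rw [Finset.sum_congr rfl hstep, ← Finset.mul_sum, ← coeff_WgBT', ihk]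
        rw [pow_zero, one_mul, RHSd_zero]
        have hdt : ¬ (down m = triv k) := by
          intro hc
          apply htriv
          apply eq_triv_of_down m ?_ hc
          have e : (2:ℕ)*(k+1)-1 = 2*k+1 := by omega
          rw [e]; exact hpair
        rw [if_neg hdt, mul_zero]
      · -- not pair but triv: contradiction
        exact absurd (htriv ▸ triv_top) hpair
      · rw [Finset.sum_empty]
    | succ n ihn =>
      rw [coeff_WgBT', sum_path_split n m (wG (k+1) m)]
      -- A branch
      have hA : ∀ i ∈ Finset.Icc 1 (2*k),
          ∑ ρ ∈ pathFinset (k+1) (swapAct i (2*k+1) m) n, wG (k+1) m (WStep.A i :: ρ)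
          = -(omegab (X 0 : MvPolynomial (Fin 2) ℤ) m i (2*k+1))
              * ((-1)^n * RHSd (k+1) (swapAct i (2*k+1) m) n) := by
        intro i hi
        rw [Finset.sum_congr rfl (fun ρ _ => wG_consA m i ρ), ← Finset.mul_sum,
          ← coeff_WgBT', ihn]
      rw [Finset.sum_congr rfl hA]
      -- B branch
      have hB : (if m.f (2*k+1) = 2*(k+1) then
          ∑ ρ ∈ pathFinset k (down m) (n+1), wG (k+1) m (WStep.B :: ρ) else 0)
          = (if m.f (2*k+1) = 2*(k+1) then
              (X 1) * ((-1)^(n+1) * RHSd k (down m) (n+1)) else 0) := by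
        split_ifs with h
        · rw [Finset.sum_congr rfl (fun ρ _ => wG_consB m ρ), ← Finset.mul_sum,
            ← coeff_WgBT', ihk]
        · rfl
      rw [hB]
      -- C branch
      have hC : ∀ i ∈ (Finset.Icc 1 (2*k)).filter (fun i => m.f i = 2*(k+1)),
          ∑ ρ ∈ pathFinset k (down (swapAct i (2*k+1) m)) n, wG (k+1) m (WStep.C i :: ρ)
          = (-1)^n * RHSd k (down (swapAct i (2*k+1) m)) n := by
        intro i hi
        rw [Finset.sum_congr rfl (fun ρ _ => wG_consC m i ρ), ← coeff_WgBT', ihk]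
      rw [Finset.sum_congr rfl hC]
      -- now the RHS algebra
      rw [RHSd_split m (n+1), TSd_rec m n]
      -- expand the A-branch with RHSd_split
      have hA2 : ∀ i ∈ Finset.Icc 1 (2*k),
          -(omegab (X 0 : MvPolynomial (Fin 2) ℤ) m i (2*k+1))
              * ((-1)^n * RHSd (k+1) (swapAct i (2*k+1) m) n)
          = -(omegab (X 0 : MvPolynomial (Fin 2) ℤ) m i (2*k+1))
              * ((-1)^n * (TSd (swapAct i (2*k+1) m) n
                + (if m.f i = 2*(k+1) then
                    (X 1) * RHSd k (down (swapAct i (2*k+1) m)) n else 0))) := by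
        intro i hi
        rw [Finset.mem_Icc] at hi
        rw [RHSd_split (swapAct i (2*k+1) m) n]
        congr 3
        apply if_congr (swapAct_pair_iff m hi.1 hi.2) rfl rfl
      rw [Finset.sum_congr rfl hA2]
      -- rewrite the C sum over the filter as an if-sum
      rw [Finset.sum_filter]
      -- rewrite TSd_rec sum conditions to the m.f i form
      have hT2 : ∀ i ∈ Finset.Icc 1 (2*k),
          omegab (X 0 : MvPolynomial (Fin 2) ℤ) m i (2*k+1) *
            (TSd (swapAct i (2*k+1) m) n
              + (X 1 - 1) * (if (swapAct i (2*k+1) m).f (2*k+1) = 2*(k+1) then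
                  RHSd k (down (swapAct i (2*k+1) m)) n else 0))
          = omegab (X 0 : MvPolynomial (Fin 2) ℤ) m i (2*k+1) *
            (TSd (swapAct i (2*k+1) m) n
              + (X 1 - 1) * (if m.f i = 2*(k+1) then
                  RHSd k (down (swapAct i (2*k+1) m)) n else 0)) := by
        intro i hi
        rw [Finset.mem_Icc] at hi
        congr 3
        apply if_congr (swapAct_pair_iff m hi.1 hi.2) rfl rfl
      rw [Finset.sum_congr rfl hT2]
      have hmain : ∀ i ∈ Finset.Icc 1 (2*k),
          -(omegab (X 0 : MvPolynomial (Fin 2) ℤ) m i (2*k+1))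
              * ((-1)^n * (TSd (swapAct i (2*k+1) m) n
                + (if m.f i = 2*(k+1) then
                    (X 1) * RHSd k (down (swapAct i (2*k+1) m)) n else 0)))
          + (if m.f i = 2*(k+1) then
              (-1)^n * RHSd k (down (swapAct i (2*k+1) m)) n else 0)
          = (-1)^(n+1) * (omegab (X 0 : MvPolynomial (Fin 2) ℤ) m i (2*k+1) *
              (TSd (swapAct i (2*k+1) m) n
                + (X 1 - 1) * (if m.f i = 2*(k+1) then
                    RHSd k (down (swapAct i (2*k+1) m)) n else 0))) := by
        intro i hi
        rw [Finset.mem_Icc] at hi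
        by_cases hχ : m.f i = 2*(k+1)
        · have hω : omegab (X 0 : MvPolynomial (Fin 2) ℤ) m i (2*k+1) = 1 := by
            unfold omegab
            rw [if_pos (charge_C hi.1 hi.2 hχ)]
          rw [if_pos hχ, if_pos hχ, if_pos hχ, hω]
          ring
        · rw [if_neg hχ, if_neg hχ, if_neg hχ]
          ring
      -- put the three pieces together
      have hBfin : (if m.f (2*k+1) = 2*(k+1) then
            (X 1) * ((-1)^(n+1) * RHSd k (down m) (n+1)) else 0)
          = (-1)^(n+1) * (if m.f (2*k+1) = 2*(k+1) then
              (X 1) * RHSd k (down m) (n+1) else 0) := by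
        split_ifs with h
        · ring
        · rw [mul_zero]
      rw [hBfin, add_right_comm, ← Finset.sum_add_distrib, Finset.sum_congr rfl hmain,
        ← Finset.mul_sum, ← mul_add]
  -- end
end PairPartition


/-- **Expansion of the `bt`-Weingarten function via flip- and hive-weighted monotone
factorisations** (Proposition 4.13 / 4.16).  For every `k ≥ 1` and `𝔪 ∈ 𝒫_k`, in
`(ℤ[b,y])⟦X⟧` (`b = X 0`, `y = X 1`):
`Wg^(bt)(𝔪) = ∑_{r ≥ 0} (-X)^r ∑_{τ ∈ Mono(𝔪), ℓ(τ)=r}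
  b^{flip(τ)} (y-1)^{hive(τ)} y^{k - hive(τ)}`. -/
theorem expansion_WgBT_monotone
    (k : ℕ) (hk : 1 ≤ k) (m : PairPartition k) :
    WgBT k m =
      PowerSeries.mk (fun r =>
        (-1 : MvPolynomial (Fin 2) ℤ) ^ r *
          ∑ l ∈ monoFinset m r,
            (MvPolynomial.X 0 : MvPolynomial (Fin 2) ℤ) ^ flip m l *
              (MvPolynomial.X 1 - 1) ^ hive l *
              (MvPolynomial.X 1) ^ (k - hive l)) := by
  apply PowerSeries.ext
  intro n
  rw [PowerSeries.coeff_mk, PairPartition.coeff_eq]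
  rfl
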